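/- arXiv:2012.09794 — 7 statements merged into one kernel-verified Lean document; each statement's English description precedes it below -/
import Mathlib

section
/- If a finite graph G is k-edge stable, then G contains no full special tree of height 2^{k+2} − 2. -/
open scoped Classical
open Finset

/-- `A` is `ε`-good in `G`: every vertex `b` partitions `A` with one side of size `< ε|A|`. -/
def Good {V : Type*} (G : SimpleGraph V) (ε : ℝ) (A : Finset V) : Prop :=
  ∀ b : V, ((A.filter fun a => G.Adj b a).card : ℝ) < ε * A.card ∨
    ((A.filter fun a => ¬ G.Adj b a).card : ℝ) < ε * A.card

/-- The majority truth value `t(a,B)` equals `1` : the non-neighbors of `a` in `B` are a minority. -/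
def Maj1 {V : Type*} (G : SimpleGraph V) (ε : ℝ) (a : V) (B : Finset V) : Prop :=
  ((B.filter fun b => ¬ G.Adj a b).card : ℝ) < ε * B.card

/-- `A` is `ε`-excellent: for every nonempty `ε`-good `B`, the majority values of elements
of `A` toward `B` agree off a set of size `< ε|A|`. -/
def Excellent {V : Type*} (G : SimpleGraph V) (ε : ℝ) (A : Finset V) : Prop :=
  ∀ B : Finset V, B.Nonempty → Good G ε B →
    ((A.filter fun a => Maj1 G ε a B).card : ℝ) < ε * A.card ∨
    ((A.filter fun a => ¬ Maj1 G ε a B).card : ℝ) < ε * A.card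

/-- `G` is `k`-edge stable: no half-graph of length `k` on `2k` distinct vertices. -/
def EdgeStable {V : Type*} (G : SimpleGraph V) (k : ℕ) : Prop :=
  ¬ ∃ a b : Fin k → V, Function.Injective (Sum.elim a b) ∧
      ∀ i j, G.Adj (a i) (b j) ↔ i < j

/-- `G` contains a full special tree of height `n`. -/
def SpecialTree {V : Type*} (G : SimpleGraph V) (n : ℕ) : Prop :=
  ∃ (b : (m : Fin n) → (Fin m → Bool) → V) (a : (Fin n → Bool) → V),
    ∀ (η : Fin n → Bool) (m : Fin n),
      G.Adj (a η) (b m fun i => η (Fin.castLE m.isLt.le i)) ↔ η m = true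

/-- Edge density between finite vertex sets. -/
noncomputable def dens {V : Type*} (G : SimpleGraph V) (A B : Finset V) : ℝ :=
  (((A ×ˢ B).filter fun p => G.Adj p.1 p.2).card : ℝ) / ((A.card : ℝ) * B.card)

/-- `(A,B)` is `ε`-regular. -/
noncomputable def Regular {V : Type*} (G : SimpleGraph V) (ε : ℝ) (A B : Finset V) : Prop :=
  ∀ A' ⊆ A, ∀ B' ⊆ B, ε * A.card ≤ (A'.card : ℝ) → ε * B.card ≤ (B'.card : ℝ) →
    |dens G A' B' - dens G A B| < ε

/-- `(A,B)` is `ε`-uniform with truth value `t`. -/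
def Uniform {V : Type*} (G : SimpleGraph V) (ε : ℝ) (A B : Finset V) (t : Bool) : Prop :=
  ((A.filter fun a =>
      ¬ (((B.filter fun b => ¬ (G.Adj a b ↔ t = true)).card : ℝ) < ε * B.card)).card : ℝ)
    < ε * A.card


namespace TreeProof

variable {V : Type*} (G : SimpleGraph V)

/-- A full special tree of height `n`, with ℕ-indexed data. -/
structure STree (n : ℕ) where
  node : ∀ m : ℕ, m < n → (ℕ → Bool) → V
  leaf : (ℕ → Bool) → V
  adj : ∀ (η : ℕ → Bool) (m : ℕ) (h : m < n), G.Adj (leaf η) (node m h η) ↔ η m = true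
  node_coh : ∀ m h η η', (∀ i, i < m → η i = η' i) → node m h η = node m h η'
  leaf_coh : ∀ η η', (∀ i, i < n → η i = η' i) → leaf η = leaf η'

variable {G}

def consF (c : Bool) (η : ℕ → Bool) : ℕ → Bool := fun i => if i = 0 then c else η (i - 1)

@[simp] lemma consF_zero (c : Bool) (η : ℕ → Bool) : consF c η 0 = c := rfl

lemma consF_succ (c : Bool) (η : ℕ → Bool) (i : ℕ) : consF c η (i+1) = η i := rfl

def tailF (η : ℕ → Bool) : ℕ → Bool := fun i => η (i + 1)

def STree.leafTree (v : V) : STree G 0 where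
  node _ h := absurd h (Nat.not_lt_zero _)
  leaf _ := v
  adj _ _ h := absurd h (Nat.not_lt_zero _)
  node_coh _ h := absurd h (Nat.not_lt_zero _)
  leaf_coh _ _ _ := rfl

def STree.child {n : ℕ} (T : STree G (n+1)) (c : Bool) : STree G n where
  node m h η := T.node (m+1) (by omega) (consF c η)
  leaf η := T.leaf (consF c η)
  adj η m h := by
    have := T.adj (consF c η) (m+1) (by omega)
    rwa [consF_succ] at this
  node_coh m h η η' hagree := by
    apply T.node_coh
    intro i hi
    rcases i with _ | i
    · rfl
    · simpa [consF_succ] using hagree i (by omega)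
  leaf_coh η η' hagree := by
    apply T.leaf_coh
    intro i hi
    rcases i with _ | i
    · rfl
    · simpa [consF_succ] using hagree i (by omega)

def STree.root {n : ℕ} (T : STree G (n+1)) : V := T.node 0 (Nat.succ_pos n) (fun _ => false)

lemma STree.node_zero {n : ℕ} (T : STree G (n+1)) (h : 0 < n+1) (η : ℕ → Bool) :
    T.node 0 h η = T.root := T.node_coh 0 h η (fun _ => false) (by omega)

lemma STree.adj_root {n : ℕ} (T : STree G (n+1)) (η : ℕ → Bool) :
    G.Adj (T.leaf η) T.root ↔ η 0 = true := by
  rw [← T.node_zero (Nat.succ_pos n) η]; exact T.adj η 0 _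

def STree.glue {n : ℕ} (r : V) (T : Bool → STree G n)
    (hr : ∀ c η, G.Adj ((T c).leaf η) r ↔ c = true) : STree G (n+1) where
  node m h η :=
    if hm : m = 0 then r else (T (η 0)).node (m-1) (by omega) (tailF η)
  leaf η := (T (η 0)).leaf (tailF η)
  adj η m h := by
    rcases m with _ | m
    · simpa using hr (η 0) (tailF η)
    · have := (T (η 0)).adj (tailF η) m (by omega)
      simpa [tailF] using this
  node_coh m h η η' hagree := by
    rcases m with _ | m
    · simp
    · have h0 : η 0 = η' 0 := hagree 0 (by omega)
      simp only [Nat.add_sub_cancel, dif_neg (Nat.succ_ne_zero m), h0]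
      apply (T (η' 0)).node_coh
      intro i hi
      simpa [tailF] using hagree (i+1) (by omega)
  leaf_coh η η' hagree := by
    have h0 : η 0 = η' 0 := hagree 0 (by omega)
    show (T (η 0)).leaf (tailF η) = (T (η' 0)).leaf (tailF η')
    rw [h0]
    apply (T (η' 0)).leaf_coh
    intro i hi
    simpa [tailF] using hagree (i+1) (by omega)


@[simp] lemma STree.glue_leaf {n : ℕ} (r : V) (T : Bool → STree G n)
    (hr : ∀ c η, G.Adj ((T c).leaf η) r ↔ c = true) (η : ℕ → Bool) :
    (STree.glue r T hr).leaf η = (T (η 0)).leaf (tailF η) := rfl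

@[simp] lemma STree.glue_node_zero {n : ℕ} (r : V) (T : Bool → STree G n)
    (hr : ∀ c η, G.Adj ((T c).leaf η) r ↔ c = true) (h : 0 < n+1) (η : ℕ → Bool) :
    (STree.glue r T hr).node 0 h η = r := rfl

lemma STree.glue_node_succ {n : ℕ} (r : V) (T : Bool → STree G n)
    (hr : ∀ c η, G.Adj ((T c).leaf η) r ↔ c = true) (m : ℕ) (h : m+1 < n+1) (η : ℕ → Bool) :
    (STree.glue r T hr).node (m+1) h η = (T (η 0)).node m (by omega) (tailF η) := by
  show (if hm : m+1 = 0 then r else _) = _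
  rw [dif_neg (Nat.succ_ne_zero m)]
  rfl

/-- leaves with distinct prefixes have distinct vertices -/
lemma STree.leaf_inj {n : ℕ} (T : STree G n) (η η' : ℕ → Bool)
    (hv : T.leaf η = T.leaf η') : ∀ i, i < n → η i = η' i := by
  by_contra hne
  push_neg at hne
  have hex : ∃ i, i < n ∧ η i ≠ η' i := hne
  classical
  let m := Nat.find hex
  obtain ⟨hmn, hmne⟩ := Nat.find_spec hex
  have hmin : ∀ i, i < m → η i = η' i := by
    intro i hi
    by_contra hc
    have hle : Nat.find hex ≤ i := Nat.find_le ⟨by omega, hc⟩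
    omega
  have h1 := T.adj η m hmn
  have h2 := T.adj η' m hmn
  rw [← hv, T.node_coh m hmn η' η (fun i hi => (hmin i hi).symm)] at h2
  rw [h1] at h2
  have hmne' : η m ≠ η' m := hmne
  rcases Bool.eq_false_or_eq_true (η m) with h | h <;>
    rcases Bool.eq_false_or_eq_true (η' m) with h' | h' <;> simp_all

/-- nodes along one branch at different depths are distinct vertices -/
lemma STree.node_ne {n : ℕ} (T : STree G n) (m m' : ℕ) (hlt : m < m') (h : m < n) (h' : m' < n)
    (η : ℕ → Bool) : T.node m h η ≠ T.node m' h' η := by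
  intro hv
  set ζ : ℕ → Bool := fun i => if i < m' then η i else !(η m) with hζ
  have e1 : T.node m' h' ζ = T.node m' h' η := T.node_coh _ _ _ _ (by
    intro i hi; simp [hζ, hi])
  have e2 : T.node m h ζ = T.node m h η := T.node_coh _ _ _ _ (by
    intro i hi; simp [hζ, show i < m' by omega])
  have a1 := T.adj ζ m' h'
  have a2 := T.adj ζ m h
  rw [e1, ← hv] at a1
  rw [e2] at a2
  rw [a2] at a1
  have hz1 : ζ m' = !(η m) := by simp [hζ]
  have hz2 : ζ m = η m := by simp [hζ, hlt]
  rw [hz1, hz2] at a1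
  cases η m <;> simp_all


/-- `T'` is a (combinatorial) minor of `T`: all its leaf/node vertices come from `T`. -/
def SubT {n' n : ℕ} (T' : STree G n') (T : STree G n) : Prop :=
  (∀ η, ∃ η₀, T'.leaf η = T.leaf η₀) ∧
  (∀ m h η, ∃ m₀ h₀ η₀, T'.node m h η = T.node m₀ h₀ η₀)

lemma SubT.trans {n₁ n₂ n₃ : ℕ} {T₁ : STree G n₁} {T₂ : STree G n₂} {T₃ : STree G n₃}
    (h12 : SubT T₁ T₂) (h23 : SubT T₂ T₃) : SubT T₁ T₃ := by
  constructor
  · intro η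
    obtain ⟨η₀, h1⟩ := h12.1 η
    obtain ⟨η₁, h2⟩ := h23.1 η₀
    exact ⟨η₁, h1.trans h2⟩
  · intro m h η
    obtain ⟨m₀, h₀, η₀, h1⟩ := h12.2 m h η
    obtain ⟨m₁, h₁, η₁, h2⟩ := h23.2 m₀ h₀ η₀
    exact ⟨m₁, h₁, η₁, h1.trans h2⟩

lemma SubT.child {n : ℕ} (T : STree G (n+1)) (c : Bool) : SubT (T.child c) T := by
  constructor
  · intro η; exact ⟨consF c η, rfl⟩
  · intro m h η; exact ⟨m+1, by omega, consF c η, rfl⟩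

lemma SubT.leafTree {n : ℕ} (T : STree G n) (η₀ : ℕ → Bool) :
    SubT (STree.leafTree (T.leaf η₀) : STree G 0) T := by
  constructor
  · intro η; exact ⟨η₀, rfl⟩
  · intro m h η; exact absurd h (Nat.not_lt_zero _)

/-- Lemma M: monochromatic minor extraction. -/
lemma lemmaM : ∀ (N : ℕ) (a b : ℕ) (T : STree G N), a + b ≤ N → ∀ (x : V),
    (∃ T' : STree G a, SubT T' T ∧ ∀ m h η, ¬ G.Adj x (T'.node m h η)) ∨
    (∃ T' : STree G b, SubT T' T ∧ ∀ m h η, G.Adj x (T'.node m h η)) := by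
  intro N
  induction N with
  | zero =>
    intro a b T h x
    have ha : a = 0 := by omega
    subst ha
    exact Or.inl ⟨STree.leafTree (T.leaf fun _ => false), SubT.leafTree T _,
      fun m h η => absurd h (Nat.not_lt_zero _)⟩
  | succ N ih =>
    intro a b T h x
    rcases Nat.eq_zero_or_pos a with ha | ha
    · subst ha
      exact Or.inl ⟨STree.leafTree (T.leaf fun _ => false), SubT.leafTree T _,
        fun m h η => absurd h (Nat.not_lt_zero _)⟩
    rcases Nat.eq_zero_or_pos b with hb | hb
    · subst hb
      exact Or.inr ⟨STree.leafTree (T.leaf fun _ => false), SubT.leafTree T _,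
        fun m h η => absurd h (Nat.not_lt_zero _)⟩
    obtain ⟨a', rfl⟩ : ∃ a', a = a' + 1 := ⟨a - 1, by omega⟩
    obtain ⟨b', rfl⟩ : ∃ b', b = b' + 1 := ⟨b - 1, by omega⟩
    by_cases hadj : G.Adj x T.root
    · -- try to get 1-minors of height b' in both children
      rcases ih (a'+1) b' (T.child false) (by omega) x with h0 | h0
      · exact Or.inl ⟨h0.choose, (h0.choose_spec.1).trans (SubT.child T false), h0.choose_spec.2⟩
      rcases ih (a'+1) b' (T.child true) (by omega) x with h1 | h1
      · exact Or.inl ⟨h1.choose, (h1.choose_spec.1).trans (SubT.child T true), h1.choose_spec.2⟩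
      obtain ⟨T0, hT0sub, hT0⟩ := h0
      obtain ⟨T1, hT1sub, hT1⟩ := h1
      refine Or.inr ?_
      set Tc : Bool → STree G b' := fun c => if c then T1 else T0 with hTc
      have hsub : ∀ c, SubT (Tc c) T := by
        intro c
        cases c
        · exact hT0sub.trans (SubT.child T false)
        · exact hT1sub.trans (SubT.child T true)
      have hr : ∀ c η, G.Adj ((Tc c).leaf η) T.root ↔ c = true := by
        intro c η
        obtain ⟨η₀, hη₀⟩ := (by cases c <;> [exact hT0sub; exact hT1sub] :
          SubT (Tc c) (T.child c)).1 η
        rw [hη₀]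
        show G.Adj (T.leaf (consF c η₀)) T.root ↔ c = true
        rw [T.adj_root]
        simp
      refine ⟨STree.glue T.root Tc hr, ?_, ?_⟩
      · constructor
        · intro η
          obtain ⟨η₀, hη₀⟩ := (hsub (η 0)).1 (tailF η)
          exact ⟨η₀, hη₀⟩
        · intro m h η
          rcases m with _ | m
          · exact ⟨0, by omega, fun _ => false, by
              rw [STree.glue_node_zero, T.node_zero]⟩
          · obtain ⟨m₀, h₀, η₀, hh⟩ := (hsub (η 0)).2 m (by omega) (tailF η)
            exact ⟨m₀, h₀, η₀, by rw [STree.glue_node_succ]; exact hh⟩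
      · intro m h η
        rcases m with _ | m
        · rw [STree.glue_node_zero]; exact hadj
        · rw [STree.glue_node_succ]
          cases hc : η 0
          · exact hT0 m (by omega) (tailF η)
          · exact hT1 m (by omega) (tailF η)
    · -- 0-case at root
      refine (ih a' (b'+1) (T.child false) (by omega) x).elim (fun h0 => ?_)
        (fun h0 => Or.inr ⟨h0.choose, (h0.choose_spec.1).trans (SubT.child T false), h0.choose_spec.2⟩)
      refine (ih a' (b'+1) (T.child true) (by omega) x).elim (fun h1 => ?_)
        (fun h1 => Or.inr ⟨h1.choose, (h1.choose_spec.1).trans (SubT.child T true), h1.choose_spec.2⟩)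
      obtain ⟨T0, hT0sub, hT0⟩ := h0
      obtain ⟨T1, hT1sub, hT1⟩ := h1
      refine Or.inl ?_
      set Tc : Bool → STree G a' := fun c => if c then T1 else T0 with hTc
      have hsub : ∀ c, SubT (Tc c) T := by
        intro c
        cases c
        · exact hT0sub.trans (SubT.child T false)
        · exact hT1sub.trans (SubT.child T true)
      have hr : ∀ c η, G.Adj ((Tc c).leaf η) T.root ↔ c = true := by
        intro c η
        obtain ⟨η₀, hη₀⟩ := (by cases c <;> [exact hT0sub; exact hT1sub] :
          SubT (Tc c) (T.child c)).1 η
        rw [hη₀]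
        show G.Adj (T.leaf (consF c η₀)) T.root ↔ c = true
        rw [T.adj_root]
        simp
      refine ⟨STree.glue T.root Tc hr, ?_, ?_⟩
      · constructor
        · intro η
          obtain ⟨η₀, hη₀⟩ := (hsub (η 0)).1 (tailF η)
          exact ⟨η₀, hη₀⟩
        · intro m h η
          rcases m with _ | m
          · exact ⟨0, by omega, fun _ => false, by
              rw [STree.glue_node_zero, T.node_zero]⟩
          · obtain ⟨m₀, h₀, η₀, hh⟩ := (hsub (η 0)).2 m (by omega) (tailF η)
            exact ⟨m₀, h₀, η₀, by rw [STree.glue_node_succ]; exact hh⟩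
      · intro m h η
        rcases m with _ | m
        · rw [STree.glue_node_zero]; exact hadj
        · rw [STree.glue_node_succ]
          cases hc : η 0
          · exact hT0 m (by omega) (tailF η)
          · exact hT1 m (by omega) (tailF η)
/-- a leaf avoiding a given value, in a tree of positive height -/
lemma exists_leaf_ne {n : ℕ} (T : STree G (n+1)) (mv : V) :
    ∃ η, T.leaf η ≠ mv := by
  by_contra hc
  push_neg at hc
  have h0 := hc (fun _ => false)
  have h1 := hc (fun _ => true)
  have := T.leaf_inj _ _ (h0.trans h1.symm) 0 (by omega)
  simp at this

/-- Lemma M'': refined extraction, additionally avoiding `x` among nodes of the 0-minor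
and the value `mv` among leaves. -/
lemma lemmaMM : ∀ (N : ℕ) (a b : ℕ) (T : STree G N), a + b + 1 ≤ N → ∀ (x mv : V),
    (∃ T' : STree G a, SubT T' T ∧
      (∀ m h η, ¬ G.Adj x (T'.node m h η) ∧ T'.node m h η ≠ x) ∧ (∀ η, T'.leaf η ≠ mv)) ∨
    (∃ T' : STree G b, SubT T' T ∧
      (∀ m h η, G.Adj x (T'.node m h η)) ∧ (∀ η, T'.leaf η ≠ mv)) := by
  intro N
  induction N with
  | zero => intro a b T h x mv; omega
  | succ N ih =>
    intro a b T h x mv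
    rcases Nat.eq_zero_or_pos a with ha | ha
    · subst ha
      obtain ⟨η₀, hη₀⟩ := exists_leaf_ne T mv
      exact Or.inl ⟨STree.leafTree (T.leaf η₀), SubT.leafTree T _,
        fun m h η => absurd h (Nat.not_lt_zero _), fun η => hη₀⟩
    rcases Nat.eq_zero_or_pos b with hb | hb
    · subst hb
      obtain ⟨η₀, hη₀⟩ := exists_leaf_ne T mv
      exact Or.inr ⟨STree.leafTree (T.leaf η₀), SubT.leafTree T _,
        fun m h η => absurd h (Nat.not_lt_zero _), fun η => hη₀⟩
    by_cases hroot : T.root = x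
    · -- bad root: all nodes strictly below are ≠ x; descend into a child avoiding mv
      have hchild : ∃ c : Bool, ∀ η, (T.child c).leaf η ≠ mv := by
        by_contra hc
        push_neg at hc
        obtain ⟨ηf, hf⟩ := hc false
        obtain ⟨ηt, ht⟩ := hc true
        have := T.leaf_inj _ _ (hf.trans ht.symm) 0 (by omega)
        simp [consF] at this
      obtain ⟨c, hc⟩ := hchild
      have hnodes_ne : ∀ m (h : m < N) η, (T.child c).node m h η ≠ x := by
        intro m h η
        show T.node (m+1) _ (consF c η) ≠ x
        rw [← hroot, ← T.node_zero (Nat.succ_pos N) (consF c η)]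
        exact (T.node_ne 0 (m+1) (by omega) _ _ _).symm
      rcases lemmaM N a b (T.child c) (by omega) x with ⟨T', hsub, hprop⟩ | ⟨T', hsub, hprop⟩
      · refine Or.inl ⟨T', hsub.trans (SubT.child T c), ?_, ?_⟩
        · intro m h η
          refine ⟨hprop m h η, ?_⟩
          obtain ⟨m₀, h₀, η₀, he⟩ := hsub.2 m h η
          rw [he]; exact hnodes_ne m₀ h₀ η₀
        · intro η
          obtain ⟨η₀, he⟩ := hsub.1 η
          rw [he]; exact hc η₀
      · refine Or.inr ⟨T', hsub.trans (SubT.child T c), hprop, ?_⟩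
        intro η
        obtain ⟨η₀, he⟩ := hsub.1 η
        rw [he]; exact hc η₀
    · obtain ⟨a', rfl⟩ : ∃ a', a = a' + 1 := ⟨a - 1, by omega⟩
      obtain ⟨b', rfl⟩ : ∃ b', b = b' + 1 := ⟨b - 1, by omega⟩
      by_cases hadj : G.Adj x T.root
      · -- recurse in both children with (a, b')
        refine (ih (a'+1) b' (T.child false) (by omega) x mv).elim
          (fun h0 => Or.inl ⟨h0.choose, (h0.choose_spec.1).trans (SubT.child T false),
            h0.choose_spec.2.1, h0.choose_spec.2.2⟩) (fun h0 => ?_)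
        refine (ih (a'+1) b' (T.child true) (by omega) x mv).elim
          (fun h1 => Or.inl ⟨h1.choose, (h1.choose_spec.1).trans (SubT.child T true),
            h1.choose_spec.2.1, h1.choose_spec.2.2⟩) (fun h1 => ?_)
        obtain ⟨T0, hT0sub, hT0, hT0l⟩ := h0
        obtain ⟨T1, hT1sub, hT1, hT1l⟩ := h1
        refine Or.inr ?_
        set Tc : Bool → STree G b' := fun c => if c then T1 else T0 with hTc
        have hsub : ∀ c, SubT (Tc c) T := by
          intro c; cases c
          · exact hT0sub.trans (SubT.child T false)
          · exact hT1sub.trans (SubT.child T true)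
        have hsubc : ∀ c, SubT (Tc c) (T.child c) := by
          intro c; cases c
          · exact hT0sub
          · exact hT1sub
        have hr : ∀ c η, G.Adj ((Tc c).leaf η) T.root ↔ c = true := by
          intro c η
          obtain ⟨η₀, hη₀⟩ := (hsubc c).1 η
          rw [hη₀]
          show G.Adj (T.leaf (consF c η₀)) T.root ↔ c = true
          rw [T.adj_root]; simp
        refine ⟨STree.glue T.root Tc hr, ?_, ?_, ?_⟩
        · constructor
          · intro η
            obtain ⟨η₀, hη₀⟩ := (hsub (η 0)).1 (tailF η)
            exact ⟨η₀, hη₀⟩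
          · intro m h η
            rcases m with _ | m
            · exact ⟨0, by omega, fun _ => false, by
                rw [STree.glue_node_zero, T.node_zero]⟩
            · obtain ⟨m₀, h₀, η₀, hh⟩ := (hsub (η 0)).2 m (by omega) (tailF η)
              exact ⟨m₀, h₀, η₀, by rw [STree.glue_node_succ]; exact hh⟩
        · intro m h η
          rcases m with _ | m
          · rw [STree.glue_node_zero]; exact hadj
          · rw [STree.glue_node_succ]
            cases hc : η 0
            · exact hT0 m (by omega) (tailF η)
            · exact hT1 m (by omega) (tailF η)
        · intro η
          rw [STree.glue_leaf]
          cases hc : η 0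
          · exact hT0l (tailF η)
          · exact hT1l (tailF η)
      · -- ¬adj and root ≠ x : recurse with (a', b)
        refine (ih a' (b'+1) (T.child false) (by omega) x mv).elim (fun h0 => ?_)
          (fun h0 => Or.inr ⟨h0.choose, (h0.choose_spec.1).trans (SubT.child T false),
            h0.choose_spec.2.1, h0.choose_spec.2.2⟩)
        refine (ih a' (b'+1) (T.child true) (by omega) x mv).elim (fun h1 => ?_)
          (fun h1 => Or.inr ⟨h1.choose, (h1.choose_spec.1).trans (SubT.child T true),
            h1.choose_spec.2.1, h1.choose_spec.2.2⟩)
        obtain ⟨T0, hT0sub, hT0, hT0l⟩ := h0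
        obtain ⟨T1, hT1sub, hT1, hT1l⟩ := h1
        refine Or.inl ?_
        set Tc : Bool → STree G a' := fun c => if c then T1 else T0 with hTc
        have hsub : ∀ c, SubT (Tc c) T := by
          intro c; cases c
          · exact hT0sub.trans (SubT.child T false)
          · exact hT1sub.trans (SubT.child T true)
        have hsubc : ∀ c, SubT (Tc c) (T.child c) := by
          intro c; cases c
          · exact hT0sub
          · exact hT1sub
        have hr : ∀ c η, G.Adj ((Tc c).leaf η) T.root ↔ c = true := by
          intro c η
          obtain ⟨η₀, hη₀⟩ := (hsubc c).1 η
          rw [hη₀]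
          show G.Adj (T.leaf (consF c η₀)) T.root ↔ c = true
          rw [T.adj_root]; simp
        refine ⟨STree.glue T.root Tc hr, ?_, ?_, ?_⟩
        · constructor
          · intro η
            obtain ⟨η₀, hη₀⟩ := (hsub (η 0)).1 (tailF η)
            exact ⟨η₀, hη₀⟩
          · intro m h η
            rcases m with _ | m
            · exact ⟨0, by omega, fun _ => false, by
                rw [STree.glue_node_zero, T.node_zero]⟩
            · obtain ⟨m₀, h₀, η₀, hh⟩ := (hsub (η 0)).2 m (by omega) (tailF η)
              exact ⟨m₀, h₀, η₀, by rw [STree.glue_node_succ]; exact hh⟩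
        · intro m h η
          rcases m with _ | m
          · rw [STree.glue_node_zero]; exact ⟨hadj, hroot⟩
          · rw [STree.glue_node_succ]
            cases hc : η 0
            · exact hT0 m (by omega) (tailF η)
            · exact hT1 m (by omega) (tailF η)
        · intro η
          rw [STree.glue_leaf]
          cases hc : η 0
          · exact hT0l (tailF η)
          · exact hT1l (tailF η)
lemma rounds_build : ∀ (s : ℕ) (t₀ : Bool) (n : ℕ) (T : STree G n), 2^(s+1) - 2 ≤ n →
    ∃ (x w : ℕ → V) (t δ : ℕ → Bool),
      (0 < s → δ 0 = !t₀) ∧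
      (∀ j, j+1 < s → δ (j+1) = !(t j)) ∧
      (∀ l j, l < s → j < s → (G.Adj (x l) (w j) ↔ (if j ≤ l then δ j else t l) = true)) ∧
      (∀ l j, l < s → j < s → x l ≠ w j) ∧
      (∀ l, l < s → ∃ η, x l = T.leaf η) ∧
      (∀ j, j < s → ∃ m hm η, w j = T.node m hm η) := by
  intro s
  induction s with
  | zero =>
    intro t₀ n T h
    exact ⟨fun _ => T.leaf fun _ => false, fun _ => T.leaf fun _ => false,
      fun _ => false, fun _ => false, by omega, by omega, by omega, by omega, by omega, by omega⟩
  | succ s ih =>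
    intro t₀ n T h
    have hp1 : 1 ≤ 2^s := Nat.one_le_two_pow
    have hp2 : 2^(s+2) = 2^s * 4 := by ring
    have hp3 : 2^(s+1) = 2^s * 2 := by ring
    obtain ⟨n'', rfl⟩ : ∃ n'', n = n''+1+1 := ⟨n - 2, by omega⟩
    set δ₀ : Bool := !t₀ with hδ₀
    set T' : STree G (n''+1) := T.child δ₀ with hT'
    set w₀ : V := T.root with hw₀
    obtain ⟨ηx, hηx⟩ := exists_leaf_ne T' w₀
    set x₀ : V := T'.leaf ηx with hx₀
    set f : ℕ := 2^(s+1) - 2 with hf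
    have hleafT' : ∀ ζ, T'.leaf ζ = T.leaf (consF δ₀ ζ) := fun ζ => rfl
    have hadjw₀ : ∀ ζ, G.Adj (T.leaf (consF δ₀ ζ)) w₀ ↔ (δ₀ = true) := by
      intro ζ
      rw [hw₀, T.adj_root]
      simp [consF]
    obtain ⟨t₁, T₁, HS, HN, HL⟩ :
        ∃ (t₁ : Bool) (T₁ : STree G f), SubT T₁ T' ∧
          (∀ m hm η, (G.Adj x₀ (T₁.node m hm η) ↔ t₁ = true) ∧ x₀ ≠ T₁.node m hm η) ∧
          (∀ η, T₁.leaf η ≠ w₀) := by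
      rcases lemmaMM (n''+1) f f T' (by omega) x₀ w₀ with ⟨T₁, hs, hn, hl⟩ | ⟨T₁, hs, hn, hl⟩
      · exact ⟨false, T₁, hs, fun m hm η => ⟨by simpa using (hn m hm η).1,
          fun he => (hn m hm η).2 he.symm⟩, hl⟩
      · exact ⟨true, T₁, hs, fun m hm η => ⟨by simpa using hn m hm η,
          (hn m hm η).ne⟩, hl⟩
    obtain ⟨x', w', t', δ', hd0, hds, hadj', hne', hxm', hwm'⟩ := ih t₁ f T₁ le_rfl
    refine ⟨fun i => if i = 0 then x₀ else x' (i-1),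
            fun i => if i = 0 then w₀ else w' (i-1),
            fun i => if i = 0 then t₁ else t' (i-1),
            fun i => if i = 0 then δ₀ else δ' (i-1), ?_, ?_, ?_, ?_, ?_, ?_⟩
    · intro _; rfl
    · intro j hj
      rcases j with _ | j'
      · show δ' 0 = !t₁
        exact hd0 (by omega)
      · show δ' (j'+1) = !(t' j')
        exact hds j' (by omega)
    · -- adjacency matrix
      intro l j hl hj
      rcases l with _ | l <;> rcases j with _ | j
      · show G.Adj x₀ w₀ ↔ (δ₀ = true)
        rw [hx₀, hleafT', hadjw₀]
      · show G.Adj x₀ (w' j) ↔ (t₁ = true)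
        obtain ⟨m, hm, η, he⟩ := hwm' j (by omega)
        rw [he]
        exact (HN m hm η).1
      · show G.Adj (x' l) w₀ ↔ (δ₀ = true)
        obtain ⟨η, he⟩ := hxm' l (by omega)
        obtain ⟨η₀, he₀⟩ := HS.1 η
        rw [he, he₀, hleafT', hadjw₀]
      · show G.Adj (x' l) (w' j) ↔ (if j+1 ≤ l+1 then δ' j else t' l) = true
        have := hadj' l j (by omega) (by omega)
        by_cases hle : j ≤ l
        · rw [if_pos (by omega : j+1 ≤ l+1)]
          rwa [if_pos hle] at this
        · rw [if_neg (by omega : ¬ (j+1 ≤ l+1))]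
          rwa [if_neg hle] at this
    · -- distinctness
      intro l j hl hj
      rcases l with _ | l <;> rcases j with _ | j
      · exact hηx
      · show x₀ ≠ w' j
        obtain ⟨m, hm, η, he⟩ := hwm' j (by omega)
        rw [he]
        exact (HN m hm η).2
      · show x' l ≠ w₀
        obtain ⟨η, he⟩ := hxm' l (by omega)
        rw [he]
        exact HL η
      · show x' l ≠ w' j
        exact hne' l j (by omega) (by omega)
    · -- x-membership
      intro l hl
      rcases l with _ | l
      · exact ⟨consF δ₀ ηx, hleafT' ηx⟩
      · obtain ⟨η, he⟩ := hxm' l (by omega)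
        obtain ⟨η₀, he₀⟩ := HS.1 η
        exact ⟨consF δ₀ η₀, by show x' l = _; rw [he, he₀, hleafT']⟩
    · -- w-membership
      intro j hj
      rcases j with _ | j
      · exact ⟨0, by omega, fun _ => false, rfl⟩
      · obtain ⟨m, hm, η, he⟩ := hwm' j (by omega)
        obtain ⟨m₀, h₀, η₀, he₀⟩ := HS.2 m hm η
        refine ⟨m₀+1, by omega, consF δ₀ η₀, ?_⟩
        show w' j = _
        rw [he, he₀]
        rfl
def rowF (a b : ℕ) (pp qq : ℕ → ℕ) (i : ℕ) : ℕ :=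
  if i < a then pp i else qq (b-1-(i-a))

def colF (a b : ℕ) (pp qq : ℕ → ℕ) (j : ℕ) : ℕ :=
  if j = 0 then 0 else if j-1 < a then pp (j-1) + 1 else qq (b-1-(j-a)) + 1

lemma assembly_core (k aa bb : ℕ) (hk : 0 < k) (hb0 : 0 < bb) (hab : aa + bb = k)
    (x w : ℕ → V) (t δ : ℕ → Bool)
    (hd0 : δ 0 = false)
    (hds : ∀ j, j+1 < k → δ (j+1) = !(t j))
    (hadj : ∀ l j, l < k → j < k → (G.Adj (x l) (w j) ↔ (if j ≤ l then δ j else t l) = true))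
    (hne : ∀ l j, l < k → j < k → x l ≠ w j)
    (pp qq : ℕ → ℕ)
    (pkey : ∀ i, i < aa → t (pp i) = true ∧ pp i + 1 < k)
    (qkey : ∀ u, u < bb → qq u < k ∧ (qq u + 1 < k → t (qq u) = false))
    (pmono : ∀ i i', i < i' → i' < aa → pp i < pp i')
    (qmono : ∀ u u', u < u' → u' < bb → qq u < qq u')
    (qtop : qq (bb-1) = k-1) :
    ∃ a b : Fin k → V, Function.Injective (Sum.elim a b) ∧
      ∀ i j, G.Adj (a i) (b j) ↔ i < j := by
  set Rn := rowF aa bb pp qq with hRn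
  set Cn := colF aa bb pp qq with hCn
  have hRlt : ∀ i, i < k → Rn i < k := by
    intro i hi
    rw [hRn, rowF]
    by_cases h : i < aa
    · rw [if_pos h]
      have := (pkey i h).2
      omega
    · rw [if_neg h]
      exact (qkey _ (by omega)).1
  have hqlt : ∀ u, u < bb - 1 → qq u < k - 1 := by
    intro u hu
    have := qmono u (bb-1) hu (by omega)
    omega
  have hClt : ∀ j, 0 < j → j < k → Cn j < k := by
    intro j hj0 hj
    rw [hCn, colF, if_neg (by omega)]
    by_cases h : j - 1 < aa
    · rw [if_pos h]
      exact (pkey _ h).2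
    · rw [if_neg h]
      have : qq (bb-1-(j-aa)) < k - 1 := hqlt _ (by omega)
      omega
  have hClt' : ∀ j, j < k → Cn j < k := by
    intro j hj
    rcases Nat.eq_zero_or_pos j with rfl | hj0
    · rw [hCn, colF, if_pos rfl]; exact hk
    · exact hClt j hj0 hj
  have main : ∀ i j, i < k → j < k → (G.Adj (x (Rn i)) (w (Cn j)) ↔ i < j) := by
    intro i j hi hj
    rw [hadj _ _ (hRlt i hi) (hClt' j hj)]
    rcases Nat.eq_zero_or_pos j with rfl | hj0
    · -- j = 0 : all-zero column
      have hcol : Cn 0 = 0 := by rw [hCn, colF, if_pos rfl]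
      rw [hcol, if_pos (Nat.zero_le _), hd0]
      simp
    by_cases hia : i < aa
    · -- one-type row
      have hrow : Rn i = pp i := by rw [hRn, rowF, if_pos hia]
      have htrow : t (Rn i) = true := by rw [hrow]; exact (pkey i hia).1
      by_cases hja : j - 1 < aa
      · -- column of one-successor type : δ = false
        have hcol : Cn j = pp (j-1) + 1 := by
          rw [hCn, colF, if_neg (by omega), if_pos hja]
        have hdc : δ (Cn j) = false := by
          rw [hcol, hds _ (pkey _ hja).2, (pkey _ hja).1]
          rfl
        by_cases hle : j ≤ i
        · have hmono : pp (j-1) < pp i := pmono (j-1) i (by omega) hia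
          have hcle : Cn j ≤ Rn i := by rw [hcol, hrow]; omega
          rw [if_pos hcle, hdc]
          simp only [Bool.false_eq_true, false_iff]
          omega
        · have hmono : pp i ≤ pp (j-1) := by
            rcases Nat.lt_or_ge i (j-1) with h' | h'
            · exact (pmono i (j-1) h' hja).le
            · have : i = j - 1 := by omega
              rw [this]
          have hcle : ¬ (Cn j ≤ Rn i) := by rw [hcol, hrow]; omega
          rw [if_neg hcle, htrow]
          simp only [true_iff]
          omega
      · -- column of zero-successor type : both branches give `true`
        have hcol : Cn j = qq (bb-1-(j-aa)) + 1 := by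
          rw [hCn, colF, if_neg (by omega), if_neg hja]
        have hiltj : i < j := by omega
        by_cases hcle : Cn j ≤ Rn i
        · have hdc : δ (Cn j) = true := by
            have h1 : Cn j < k := hClt j hj0 hj
            rw [hcol] at h1 ⊢
            rw [hds _ h1, (qkey _ (by omega)).2 h1]
            rfl
          rw [if_pos hcle, hdc]
          simpa using hiltj
        · rw [if_neg hcle, htrow]
          simpa using hiltj
    · -- zero-type row
      have hrow : Rn i = qq (bb-1-(i-aa)) := by rw [hRn, rowF, if_neg hia]
      have htrow : Rn i + 1 < k → t (Rn i) = false := by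
        rw [hrow]; exact (qkey _ (by omega)).2
      by_cases hja : j - 1 < aa
      · -- goal is `false` (j ≤ aa ≤ i)
        have hgoal : ¬ (i < j) := by omega
        have hcol : Cn j = pp (j-1) + 1 := by
          rw [hCn, colF, if_neg (by omega), if_pos hja]
        by_cases hcle : Cn j ≤ Rn i
        · have hdc : δ (Cn j) = false := by
            rw [hcol, hds _ (pkey _ hja).2, (pkey _ hja).1]
            rfl
          rw [if_pos hcle, hdc]
          simpa using hgoal
        · have h1 : Cn j ≤ k - 1 := by
            rw [hcol]
            have := (pkey _ hja).2
            omega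
          rw [if_neg hcle, htrow (by omega)]
          simpa using hgoal
      · -- both row and column of zero type
        have hcol : Cn j = qq (bb-1-(j-aa)) + 1 := by
          rw [hCn, colF, if_neg (by omega), if_neg hja]
        by_cases hle : j ≤ i
        · -- goal false
          have hmono : qq (bb-1-(i-aa)) ≤ qq (bb-1-(j-aa)) := by
            rcases Nat.lt_or_ge (bb-1-(i-aa)) (bb-1-(j-aa)) with h' | h'
            · exact (qmono _ _ h' (by omega)).le
            · have : bb-1-(i-aa) = bb-1-(j-aa) := by omega
              rw [this]
          have hcle : ¬ (Cn j ≤ Rn i) := by rw [hcol, hrow]; omega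
          have hz : qq (bb-1-(j-aa)) < k - 1 := hqlt _ (by omega)
          rw [if_neg hcle, htrow (by rw [hrow]; omega)]
          simp only [Bool.false_eq_true, false_iff]
          omega
        · -- goal true
          have hmono : qq (bb-1-(j-aa)) < qq (bb-1-(i-aa)) :=
            qmono _ _ (by omega) (by omega)
          have hcle : Cn j ≤ Rn i := by rw [hcol, hrow]; omega
          have hdc : δ (Cn j) = true := by
            have h1 : Cn j < k := hClt j hj0 hj
            rw [hcol] at h1 ⊢
            rw [hds _ h1, (qkey _ (by omega)).2 h1]
            rfl
          rw [if_pos hcle, hdc]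
          simp only [true_iff]
          omega
  -- final configuration
  refine ⟨fun i => x (Rn i), fun j => w (Cn j), ?_, ?_⟩
  · have hpat : ∀ i j : Fin k, G.Adj (x (Rn i)) (w (Cn j)) ↔ (i : ℕ) < j :=
      fun i j => main i j i.isLt j.isLt
    have hAinj : ∀ i i' : Fin k, x (Rn i) = x (Rn i') → i = i' := by
      intro i i' he
      by_contra hne'
      rcases Ne.lt_or_gt (show (i:ℕ) ≠ (i':ℕ) from fun hc => hne' (Fin.ext hc)) with hlt | hlt
      · have h1 : G.Adj (x (Rn i)) (w (Cn i')) := (hpat i i').mpr hlt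
        have h2 : ¬ G.Adj (x (Rn i')) (w (Cn i')) := fun hc => by
          have := (hpat i' i').mp hc; omega
        rw [he] at h1; exact h2 h1
      · have h1 : G.Adj (x (Rn i')) (w (Cn i)) := (hpat i' i).mpr hlt
        have h2 : ¬ G.Adj (x (Rn i)) (w (Cn i)) := fun hc => by
          have := (hpat i i).mp hc; omega
        rw [← he] at h1; exact h2 h1
    have hBinj : ∀ j j' : Fin k, w (Cn j) = w (Cn j') → j = j' := by
      intro j j' he
      by_contra hne'
      rcases Ne.lt_or_gt (show (j:ℕ) ≠ (j':ℕ) from fun hc => hne' (Fin.ext hc)) with hlt | hlt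
      · have h1 : G.Adj (x (Rn j)) (w (Cn j')) := (hpat j j').mpr hlt
        have h2 : ¬ G.Adj (x (Rn j)) (w (Cn j)) := fun hc => by
          have := (hpat j j).mp hc; omega
        rw [he] at h2; exact h2 h1
      · have h1 : G.Adj (x (Rn j')) (w (Cn j)) := (hpat j' j).mpr hlt
        have h2 : ¬ G.Adj (x (Rn j')) (w (Cn j')) := fun hc => by
          have := (hpat j' j').mp hc; omega
        rw [← he] at h2; exact h2 h1
    have hABne : ∀ i j : Fin k, x (Rn i) ≠ w (Cn j) :=
      fun i j => hne _ _ (hRlt i i.isLt) (hClt' j j.isLt)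
    intro u v huv
    match u, v with
    | Sum.inl i, Sum.inl i' => exact congrArg Sum.inl (hAinj i i' huv)
    | Sum.inr j, Sum.inr j' => exact congrArg Sum.inr (hBinj j j' huv)
    | Sum.inl i, Sum.inr j => exact absurd huv (hABne i j)
    | Sum.inr j, Sum.inl i => exact absurd huv.symm (hABne i j)
  · intro i j
    rw [main i j i.isLt j.isLt, Fin.lt_def]
lemma assembly (k : ℕ) (hk : 0 < k) (x w : ℕ → V) (t δ : ℕ → Bool)
    (hd0 : δ 0 = false)
    (hds : ∀ j, j+1 < k → δ (j+1) = !(t j))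
    (hadj : ∀ l j, l < k → j < k → (G.Adj (x l) (w j) ↔ (if j ≤ l then δ j else t l) = true))
    (hne : ∀ l j, l < k → j < k → x l ≠ w j) :
    ∃ a b : Fin k → V, Function.Injective (Sum.elim a b) ∧
      ∀ i j, G.Adj (a i) (b j) ↔ i < j := by
  classical
  have hab : ((Finset.range k).filter (fun p => t p = true ∧ p+1 < k)).card
      + ((Finset.range k).filter (fun p => ¬(t p = true ∧ p+1 < k))).card = k := by
    rw [Finset.card_filter_add_card_filter_not, Finset.card_range]
  have hkQ : k - 1 ∈ (Finset.range k).filter (fun p => ¬(t p = true ∧ p+1 < k)) := by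
    rw [Finset.mem_filter, Finset.mem_range]
    exact ⟨by omega, fun hcon => by omega⟩
  have hb0 : 0 < ((Finset.range k).filter (fun p => ¬(t p = true ∧ p+1 < k))).card :=
    Finset.card_pos.mpr ⟨k-1, hkQ⟩
  set P := (Finset.range k).filter (fun p => t p = true ∧ p+1 < k) with hP
  set Q := (Finset.range k).filter (fun p => ¬(t p = true ∧ p+1 < k)) with hQ
  refine assembly_core k P.card Q.card hk hb0 hab x w t δ hd0 hds hadj hne
    (fun i => if h : i < P.card then (P.orderEmbOfFin rfl ⟨i, h⟩ : ℕ) else 0)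
    (fun u => if h : u < Q.card then (Q.orderEmbOfFin rfl ⟨u, h⟩ : ℕ) else 0)
    ?_ ?_ ?_ ?_ ?_
  · intro i hi
    rw [dif_pos hi]
    have hmem := Finset.orderEmbOfFin_mem P rfl ⟨i, hi⟩
    exact (Finset.mem_filter.mp hmem).2
  · intro u hu
    rw [dif_pos hu]
    have hmem := Finset.mem_filter.mp (Finset.orderEmbOfFin_mem Q rfl ⟨u, hu⟩)
    refine ⟨Finset.mem_range.mp hmem.1, fun h1 => ?_⟩
    rcases Bool.eq_false_or_eq_true (t (Q.orderEmbOfFin rfl ⟨u, hu⟩)) with ht | hf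
    · exact absurd ⟨ht, h1⟩ hmem.2
    · exact hf
  · intro i i' hii hi'
    rw [dif_pos (by omega : i < P.card), dif_pos hi']
    exact (P.orderEmbOfFin rfl).strictMono (show (⟨i, by omega⟩ : Fin P.card) < ⟨i', hi'⟩ by
      rw [Fin.lt_def]; exact hii)
  · intro u u' huu hu'
    rw [dif_pos (by omega : u < Q.card), dif_pos hu']
    exact (Q.orderEmbOfFin rfl).strictMono (show (⟨u, by omega⟩ : Fin Q.card) < ⟨u', hu'⟩ by
      rw [Fin.lt_def]; exact huu)
  · rw [dif_pos (by omega : Q.card - 1 < Q.card)]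
    obtain ⟨u, hu⟩ : ∃ u, (Q.orderEmbOfFin rfl u : ℕ) = k - 1 := by
      have hmem : (k-1 : ℕ) ∈ (↑Q : Set ℕ) := hkQ
      rw [← Finset.range_orderEmbOfFin Q rfl] at hmem
      obtain ⟨u, hu⟩ := hmem
      exact ⟨u, hu⟩
    have h1 : (Q.orderEmbOfFin rfl u : ℕ) ≤ Q.orderEmbOfFin rfl ⟨Q.card - 1, by omega⟩ := by
      have := u.isLt
      exact (Q.orderEmbOfFin rfl).monotone (by rw [Fin.le_def]; simp only []; omega)
    have h2 : (Q.orderEmbOfFin rfl ⟨Q.card - 1, by omega⟩ : ℕ) < k :=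
      Finset.mem_range.mp
        (Finset.mem_filter.mp (Finset.orderEmbOfFin_mem Q rfl ⟨Q.card - 1, by omega⟩)).1
    omega

/-- conversion from the `SpecialTree` data to an `STree` -/
def ofSpecial (n : ℕ) (b : (m : Fin n) → (Fin m → Bool) → V) (a : (Fin n → Bool) → V)
    (hadj : ∀ (η : Fin n → Bool) (m : Fin n),
      G.Adj (a η) (b m fun i => η (Fin.castLE m.isLt.le i)) ↔ η m = true) : STree G n where
  node m hm η := b ⟨m, hm⟩ (fun i => η i.val)
  leaf η := a (fun i => η i.val)
  adj η m hm := hadj (fun i => η i.val) ⟨m, hm⟩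
  node_coh m hm η η' hagree :=
    congrArg (b ⟨m, hm⟩) (funext fun i : Fin m => hagree i.val i.isLt)
  leaf_coh η η' hagree :=
    congrArg a (funext fun i : Fin n => hagree i.val i.isLt)

theorem main_result {k n : ℕ} (hn : 2^(k+1) - 2 ≤ n) (T : STree G n)
    (h : ¬ ∃ a b : Fin k → V, Function.Injective (Sum.elim a b) ∧
      ∀ i j, G.Adj (a i) (b j) ↔ i < j) : False := by
  rcases Nat.eq_zero_or_pos k with rfl | hk
  · exact h ⟨Fin.elim0, Fin.elim0, fun u => by rcases u with u | u <;> exact u.elim0,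
      fun i => i.elim0⟩
  obtain ⟨x, w, t, δ, hd0, hds, hadj, hne, _, _⟩ := rounds_build k true n T hn
  exact h (assembly k hk x w t δ (by simpa using hd0 hk) hds hadj hne)
end TreeProof

/-- a k-edge stable finite graph has no full special tree of height 2^(k+2) - 2. -/
theorem no_special_tree_of_edgeStable {V : Type*} [Fintype V] (G : SimpleGraph V) (k : ℕ)
    (h : EdgeStable G k) : ¬ SpecialTree G (2 ^ (k + 2) - 2) := by
  intro hST
  obtain ⟨bT, aT, hT⟩ := hST
  have hbound : 2^(k+1) - 2 ≤ 2^(k+2) - 2 := by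
    have : (2:ℕ)^(k+1) ≤ 2^(k+2) := Nat.pow_le_pow_right (by norm_num) (by omega)
    omega
  exact TreeProof.main_result hbound (TreeProof.ofSpecial (2^(k+2)-2) bT aT hT) h
end

section
/- If a graph G contains no full special tree of height n, then G is 2^{n+1}-edge stable. -/
open scoped Classical
open Finset

def treeIdxA (n : ℕ) (η : ℕ → Bool) : ℕ :=
  ∑ i ∈ Finset.range n, if η i then 0 else 2 ^ (n - 1 - i)

def treeIdxB (n m : ℕ) (ρ : ℕ → Bool) : ℕ :=
  (∑ i ∈ Finset.range m, if ρ i then 0 else 2 ^ (n - 1 - i)) + 2 ^ (n - 1 - m)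

lemma geomAux : ∀ c a : ℕ, ∑ i ∈ Finset.Ico a (a + c), 2 ^ (a + c - 1 - i) = 2 ^ c - 1 := by
  intro c
  induction c with
  | zero => simp
  | succ c ih =>
    intro a
    rw [Finset.sum_eq_sum_Ico_succ_bot (by omega : a < a + (c + 1))]
    have h1 : a + (c + 1) = (a + 1) + c := by omega
    have h2 : a + (c + 1) - 1 - a = c := by omega
    rw [h2]
    have h3 : ∑ i ∈ Finset.Ico (a+1) (a + (c+1)), 2 ^ (a + (c + 1) - 1 - i) = 2 ^ c - 1 := by
      have := ih (a + 1)
      rw [← h1] at this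
      convert this using 2 with i
      all_goals omega
    rw [h3]
    have : 1 ≤ 2 ^ c := Nat.one_le_two_pow
    have h4 : 2 ^ (c + 1) = 2 ^ c * 2 := pow_succ 2 c
    omega

lemma sumPowLe (k n : ℕ) (h : k ≤ n) : (∑ i ∈ Finset.range k, 2 ^ (n - 1 - i)) ≤ 2 ^ n - 1 := by
  have h1 : (∑ i ∈ Finset.range k, 2 ^ (n - 1 - i)) ≤ ∑ i ∈ Finset.range n, 2 ^ (n - 1 - i) :=
    Finset.sum_le_sum_of_subset (Finset.range_subset_range.2 h)
  have h2 : ∑ i ∈ Finset.range n, 2 ^ (n - 1 - i) = 2 ^ n - 1 := by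
    have := geomAux n 0
    simp only [Nat.zero_add] at this
    rw [Finset.range_eq_Ico]
    convert this using 2 with i
    all_goals omega
  omega

lemma treeIdxA_lt (n : ℕ) (η : ℕ → Bool) : treeIdxA n η < 2 ^ (n + 1) := by
  have h1 : treeIdxA n η ≤ ∑ i ∈ Finset.range n, 2 ^ (n - 1 - i) := by
    apply Finset.sum_le_sum
    intro i _
    split <;> simp
  have h2 := sumPowLe n n le_rfl
  have h3 : 1 ≤ 2 ^ n := Nat.one_le_two_pow
  have h4 : 2 ^ (n + 1) = 2 ^ n * 2 := pow_succ 2 n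
  omega

lemma treeIdxB_lt (n m : ℕ) (hm : m < n) (ρ : ℕ → Bool) : treeIdxB n m ρ < 2 ^ (n + 1) := by
  have h1 : treeIdxB n m ρ ≤ ∑ i ∈ Finset.range (m + 1), 2 ^ (n - 1 - i) := by
    rw [Finset.sum_range_succ]
    unfold treeIdxB
    gcongr with i
    · split <;> simp
  have h2 := sumPowLe (m + 1) n hm
  have h3 : 1 ≤ 2 ^ n := Nat.one_le_two_pow
  have h4 : 2 ^ (n + 1) = 2 ^ n * 2 := pow_succ 2 n
  omega

lemma treeIdxB_congr (n m : ℕ) {ρ ρ' : ℕ → Bool} (h : ∀ i < m, ρ i = ρ' i) :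
    treeIdxB n m ρ = treeIdxB n m ρ' := by
  unfold treeIdxB
  congr 1
  apply Finset.sum_congr rfl
  intro i hi
  rw [h i (Finset.mem_range.1 hi)]

lemma treeIdx_key (n m : ℕ) (hm : m < n) (η : ℕ → Bool) :
    treeIdxA n η < treeIdxB n m η ↔ η m = true := by
  unfold treeIdxA treeIdxB
  have hsplit : ∑ i ∈ Finset.range n, (if η i then 0 else 2 ^ (n - 1 - i)) =
      (∑ i ∈ Finset.range m, (if η i then 0 else 2 ^ (n - 1 - i)))
      + (if η m then 0 else 2 ^ (n - 1 - m))
      + ∑ i ∈ Finset.Ico (m + 1) n, (if η i then 0 else 2 ^ (n - 1 - i)) := by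
    rw [Finset.range_eq_Ico, ← Finset.sum_Ico_consecutive _ (Nat.zero_le m) hm.le,
      Finset.sum_eq_sum_Ico_succ_bot hm, ← Finset.range_eq_Ico]
    ring
  have hT : (∑ i ∈ Finset.Ico (m + 1) n, (if η i then 0 else 2 ^ (n - 1 - i)))
      < 2 ^ (n - 1 - m) := by
    have h1 : (∑ i ∈ Finset.Ico (m + 1) n, (if η i then 0 else 2 ^ (n - 1 - i)))
        ≤ ∑ i ∈ Finset.Ico (m + 1) n, 2 ^ (n - 1 - i) := by
      apply Finset.sum_le_sum; intro i _; split <;> simp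
    have h2 : ∑ i ∈ Finset.Ico (m + 1) n, 2 ^ (n - 1 - i) = 2 ^ (n - m - 1) - 1 := by
      have := geomAux (n - m - 1) (m + 1)
      have he : m + 1 + (n - m - 1) = n := by omega
      rw [he] at this
      exact this
    have h3 : (0:ℕ) < 2 ^ (n - m - 1) := Nat.pow_pos (by norm_num)
    have h4 : n - 1 - m = n - m - 1 := by omega
    rw [h4]
    omega
  rw [hsplit]
  cases hη : η m <;> simp [hη] <;> omega

/-- if G has no full special tree of height n, then G is 2^(n+1)-edge stable. -/
theorem edgeStable_of_no_special_tree {V : Type*} (G : SimpleGraph V) (n : ℕ)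
    (h : ¬ SpecialTree G n) : EdgeStable G (2 ^ (n + 1)) := by
  rintro ⟨a, b, -, hab⟩
  apply h
  refine ⟨fun m ρ => b ⟨treeIdxB n m (fun i => if hi : i < m then ρ ⟨i, hi⟩ else false),
      treeIdxB_lt n m m.isLt _⟩,
    fun η => a ⟨treeIdxA n (fun i => if hi : i < n then η ⟨i, hi⟩ else false),
      treeIdxA_lt n _⟩, ?_⟩
  intro η m
  set η' : ℕ → Bool := fun i => if hi : i < n then η ⟨i, hi⟩ else false with hη'
  have hcongr : treeIdxB n m
      (fun i => if hi : i < (m : ℕ) then (fun j => η (Fin.castLE m.isLt.le j)) ⟨i, hi⟩ else false)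
      = treeIdxB n m η' := by
    apply treeIdxB_congr
    intro i hi
    simp only [hη']
    rw [dif_pos hi, dif_pos (hi.trans m.isLt)]
    rfl
  rw [hab]
  rw [Fin.mk_lt_mk, hcongr, treeIdx_key n m m.isLt η']
  have : η' (m : ℕ) = η m := by
    simp only [hη']
    rw [dif_pos m.isLt]
  rw [this]
end

section
/- Let G be a finite graph with no full special tree of height t, and let 0 < ε < 1/2^t. Then for every subset A of G with |A| ≥ 1/ε^t, there exists an ε-excellent subset A′ ⊆ A with |A′| ≥ ε^{t−1}|A|. -/
open scoped Classical
open Finset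

/-- Claim 1: existence of large ε-excellent subsets. -/
theorem exists_excellent_subset {V : Type*} [Fintype V] (G : SimpleGraph V) (t : ℕ)
    (hG : ¬ SpecialTree G t) (ε : ℝ) (hε0 : 0 < ε) (hε : ε < 1 / 2 ^ t)
    (A : Finset V) (hA : 1 / ε ^ t ≤ (A.card : ℝ)) :
    ∃ A' ⊆ A, Excellent G ε A' ∧ ε ^ (t - 1) * A.card ≤ (A'.card : ℝ) := by
  classical
  have h2t : (1:ℝ) ≤ 2 ^ t := one_le_pow₀ (by norm_num)
  have hε1 : ε < 1 := lt_of_lt_of_le hε (by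
    rw [div_le_one (by positivity)]; exact h2t)
  have hApos : (0:ℝ) < A.card := lt_of_lt_of_le (by positivity) hA
  rcases Nat.eq_zero_or_pos t with ht0 | htpos
  · exfalso
    apply hG
    subst ht0
    have hA1 : (1:ℝ) ≤ A.card := by simpa using hA
    have hAne : A.Nonempty := Finset.card_pos.mp (by exact_mod_cast hA1)
    obtain ⟨a0, _⟩ := hAne
    exact ⟨fun m => m.elim0, fun _ => a0, fun η m => m.elim0⟩
  by_contra hcon
  push_neg at hcon
  -- splitting lemma
  have splitL : ∀ C : Finset V, C ⊆ A → ε ^ (t-1) * A.card ≤ (C.card : ℝ) →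
      ∃ B : Finset V, B.Nonempty ∧ Good G ε B ∧
        ε * C.card ≤ ((C.filter fun a => Maj1 G ε a B).card : ℝ) ∧
        ε * C.card ≤ ((C.filter fun a => ¬ Maj1 G ε a B).card : ℝ) := by
    intro C hCA hCsize
    have hNE : ¬ Excellent G ε C := by
      intro h
      exact absurd hCsize (not_le.mpr (hcon C hCA h))
    unfold Excellent at hNE
    push_neg at hNE
    obtain ⟨B, hB1, hB2, hB3, hB4⟩ := hNE
    exact ⟨B, hB1, hB2, hB3, hB4⟩
  have key : ∀ n, n ≤ t → ∃ (As : (Fin n → Bool) → Finset V)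
      (Bs : (m : Fin n) → (Fin m.val → Bool) → Finset V),
      (∀ η, As η ⊆ A) ∧
      (∀ η, ε ^ n * A.card ≤ ((As η).card : ℝ)) ∧
      (∀ (m : Fin n) (ρ : Fin m.val → Bool), (Bs m ρ).Nonempty ∧ Good G ε (Bs m ρ)) ∧
      (∀ (η : Fin n → Bool) (m : Fin n), ∀ a ∈ As η,
        (η m = true → Maj1 G ε a (Bs m fun i => η (Fin.castLE m.isLt.le i))) ∧
        (η m = false → ¬ Maj1 G ε a (Bs m fun i => η (Fin.castLE m.isLt.le i)))) := by
    intro n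
    induction n with
    | zero =>
      intro _
      exact ⟨fun _ => A, fun m => m.elim0, fun _ => Finset.Subset.refl A,
        fun _ => by simp, fun m => m.elim0, fun η m => m.elim0⟩
    | succ n ih =>
      intro hn
      obtain ⟨As, Bs, hsub, hsize, hBgood, hmaj⟩ := ih (by omega)
      have hsizet : ∀ η, ε ^ (t-1) * A.card ≤ ((As η).card : ℝ) := by
        intro η
        refine le_trans ?_ (hsize η)
        exact mul_le_mul_of_nonneg_right
          (pow_le_pow_of_le_one hε0.le hε1.le (by omega)) hApos.le
      have hsplit : ∀ η : Fin n → Bool, ∃ B : Finset V, B.Nonempty ∧ Good G ε B ∧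
          ε * (As η).card ≤ (((As η).filter fun a => Maj1 G ε a B).card : ℝ) ∧
          ε * (As η).card ≤ (((As η).filter fun a => ¬ Maj1 G ε a B).card : ℝ) :=
        fun η => splitL (As η) (hsub η) (hsizet η)
      choose Bf hBf1 hBf2 hBf3 hBf4 using hsplit
      refine ⟨fun η' => if η' (Fin.last n) = true
          then (As (Fin.init η')).filter (fun a => Maj1 G ε a (Bf (Fin.init η')))
          else (As (Fin.init η')).filter (fun a => ¬ Maj1 G ε a (Bf (Fin.init η'))),
        Fin.lastCases (fun ρ => Bf ρ) (fun i ρ => Bs i ρ), ?_, ?_, ?_, ?_⟩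
      · intro η'
        dsimp only
        split_ifs <;> exact (Finset.filter_subset _ _).trans (hsub _)
      · intro η'
        have h1 : ε ^ (n+1) * (A.card : ℝ) = ε * (ε ^ n * A.card) := by ring
        rw [h1]
        dsimp only
        split_ifs with h
        · exact le_trans (mul_le_mul_of_nonneg_left (hsize _) hε0.le) (hBf3 _)
        · exact le_trans (mul_le_mul_of_nonneg_left (hsize _) hε0.le) (hBf4 _)
      · intro m
        induction m using Fin.lastCases with
        | last =>
          intro ρ
          simpa using ⟨hBf1 ρ, hBf2 ρ⟩
        | cast i =>
          intro ρ
          simpa using hBgood i ρ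
      · intro η' m a ha
        dsimp only at ha
        induction m using Fin.lastCases with
        | last =>
          have hρ : (fun i => η' (Fin.castLE (Fin.last n).isLt.le i)) = Fin.init η' := by
            funext i
            exact congrArg η' (Fin.ext rfl)
          simp only [Fin.lastCases_last]
          rw [hρ]
          by_cases h : η' (Fin.last n) = true
          · rw [if_pos h] at ha
            exact ⟨fun _ => (Finset.mem_filter.mp ha).2, fun hf => by rw [h] at hf; cases hf⟩
          · rw [if_neg h] at ha
            exact ⟨fun ht' => absurd ht' h, fun _ => (Finset.mem_filter.mp ha).2⟩
        | cast i =>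
          have ha' : a ∈ As (Fin.init η') := by
            split_ifs at ha <;> exact Finset.mem_filter.mp ha |>.1
          have hρ : (fun j => η' (Fin.castLE (Fin.castSucc i).isLt.le j)) =
              (fun j => (Fin.init η') (Fin.castLE i.isLt.le j)) := by
            funext j
            exact congrArg η' (Fin.ext rfl)
          have hval : η' (Fin.castSucc i) = (Fin.init η') i := rfl
          simp only [Fin.lastCases_castSucc]
          rw [hρ, hval]
          exact hmaj (Fin.init η') i a ha'
  obtain ⟨As, Bs, hsub, hsize, hBgood, hmaj⟩ := key t le_rfl
  -- leaves are nonempty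
  have hεtpos : (0:ℝ) < ε ^ t := by positivity
  have hleaf : ∀ η : Fin t → Bool, ∃ a, a ∈ As η := by
    intro η
    have h1 : (1:ℝ) ≤ (As η).card := by
      have := hsize η
      have h2 : (1:ℝ) ≤ ε ^ t * A.card := by
        have h3 := mul_le_mul_of_nonneg_left hA hεtpos.le
        rwa [mul_one_div, div_self (ne_of_gt hεtpos)] at h3
      linarith
    have : (As η).Nonempty := Finset.card_pos.mp (by exact_mod_cast lt_of_lt_of_le zero_lt_one h1)
    exact this
  choose aη haη using hleaf
  -- choose tree nodes
  have hnode : ∀ (m : Fin t) (ρ : Fin m.val → Bool), ∃ b ∈ Bs m ρ,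
      ∀ η : Fin t → Bool, (fun i => η (Fin.castLE m.isLt.le i)) = ρ →
        (G.Adj (aη η) b ↔ η m = true) := by
    intro m ρ
    obtain ⟨hBne, hBg⟩ := hBgood m ρ
    set B := Bs m ρ with hB
    have hBpos : (0:ℝ) < B.card := by
      exact_mod_cast Finset.card_pos.mpr hBne
    set S : Finset (Fin t → Bool) :=
      Finset.univ.filter (fun η => (fun i => η (Fin.castLE m.isLt.le i)) = ρ) with hS
    set bad : (Fin t → Bool) → Finset V :=
      fun η => B.filter (fun b => ¬ (G.Adj (aη η) b ↔ η m = true)) with hbad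
    have hbadcard : ∀ η ∈ S, ((bad η).card : ℝ) < ε * B.card := by
      intro η hη
      have hρ : (fun i => η (Fin.castLE m.isLt.le i)) = ρ := (Finset.mem_filter.mp hη).2
      have hm := hmaj η m (aη η) (haη η)
      rw [hρ] at hm
      by_cases hv : η m = true
      · have hmaj1 := hm.1 hv
        unfold Maj1 at hmaj1
        have heq : bad η = B.filter (fun b => ¬ G.Adj (aη η) b) := by
          apply Finset.filter_congr
          intro b _
          simp [hv]
        rw [heq]
        exact hmaj1
      · have hv' : η m = false := by simpa using hv
        have hnm := hm.2 hv'
        unfold Maj1 at hnm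
        push_neg at hnm
        have heq : bad η = B.filter (fun b => G.Adj (aη η) b) := by
          apply Finset.filter_congr
          intro b _
          simp [hv']
        rw [heq]
        rcases hBg (aη η) with h | h
        · exact h
        · exact absurd hnm (not_le.mpr h)
    have hSne : S.Nonempty := by
      refine ⟨fun i => if h : i.val < m.val then ρ ⟨i.val, h⟩ else false, ?_⟩
      simp only [hS, Finset.mem_filter, Finset.mem_univ, true_and]
      funext j
      simp [j.isLt]
    have hScard : (S.card : ℝ) ≤ 2 ^ t := by
      have h1 : S.card ≤ Fintype.card (Fin t → Bool) := Finset.card_le_univ S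
      have h2 : Fintype.card (Fin t → Bool) = 2 ^ t := by simp
      rw [h2] at h1
      exact_mod_cast h1
    set T := S.biUnion bad with hT
    have hTB : T ⊆ B := by
      intro b hb
      obtain ⟨η, _, hb2⟩ := Finset.mem_biUnion.mp hb
      exact Finset.filter_subset _ _ hb2
    have hTcard : (T.card : ℝ) < B.card := by
      have h1 : (T.card : ℝ) ≤ ∑ η ∈ S, ((bad η).card : ℝ) := by
        exact_mod_cast Nat.cast_le.mpr (Finset.card_biUnion_le)
      have h2 : ∑ η ∈ S, ((bad η).card : ℝ) < ∑ η ∈ S, ε * B.card :=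
        Finset.sum_lt_sum_of_nonempty hSne hbadcard
      have h3 : ∑ η ∈ S, ε * (B.card:ℝ) = S.card * (ε * B.card) := by
        rw [Finset.sum_const, nsmul_eq_mul]
      have h4 : (S.card : ℝ) * (ε * B.card) ≤ 2 ^ t * (ε * B.card) := by
        apply mul_le_mul_of_nonneg_right hScard
        positivity
      have h5 : (2:ℝ) ^ t * (ε * B.card) < 2 ^ t * ((1 / 2 ^ t) * B.card) := by
        apply mul_lt_mul_of_pos_left _ (by positivity)
        exact mul_lt_mul_of_pos_right hε hBpos
      have h6 : (2:ℝ) ^ t * ((1 / 2 ^ t) * B.card) = B.card := by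
        field_simp
      linarith
    have hTlt : T.card < B.card := by exact_mod_cast hTcard
    obtain ⟨b, hbB, hbT⟩ := Finset.exists_of_ssubset (lt_of_le_of_ne hTB
      (fun hEq => by rw [hEq] at hTlt; exact lt_irrefl _ hTlt))
    refine ⟨b, hbB, ?_⟩
    intro η hη
    have hηS : η ∈ S := by
      simp only [hS, Finset.mem_filter, Finset.mem_univ, true_and]
      exact hη
    have : b ∉ bad η := fun hb => hbT (Finset.mem_biUnion.mpr ⟨η, hηS, hb⟩)
    simp only [hbad, Finset.mem_filter, not_and, not_not] at this
    exact this hbB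
  choose bsel hbsel1 hbsel2 using hnode
  apply hG
  exact ⟨fun m ρ => bsel m ρ, aη, fun η m =>
    hbsel2 m (fun i => η (Fin.castLE m.isLt.le i)) η rfl⟩
end

section
/- Let G be a finite graph with no full special tree of height t, let 0 < ε < 1/2^t, and let s_0, …, s_{t−1} be a size sequence for ε (i.e., ε·s_ℓ ≥ s_{ℓ+1} for ℓ < t−1, s_{t−1} divides every s_ℓ, and s_{t−1} > t). Then every subset A of G with |A| ≥ max{s_0, 1/ε^t} contains an ε-excellent subset A′ with |A′| = s_ℓ for some ℓ < t. -/
open scoped Classical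
open Finset

/-- Auxiliary tree of finsets: at level `ℓ+1` apply the splitting function `D` to the
level-`ℓ` set, choosing the side given by the bit `η ℓ`. -/
def treeAux {V : Type*} (A₀ : Finset V) (D : ℕ → Finset V → Bool → Finset V) :
    ℕ → (ℕ → Bool) → Finset V
  | 0, _ => A₀
  | (ℓ+1), η => D ℓ (treeAux A₀ D ℓ η) (η ℓ)

/-- Claim 2: existence of an ε-excellent subset whose size is a member
of a prescribed size sequence. -/
theorem exists_excellent_subset_of_prescribed_size {V : Type*} [Fintype V]
    (G : SimpleGraph V) (t : ℕ) (ht : 1 ≤ t) (hG : ¬ SpecialTree G t)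
    (ε : ℝ) (hε0 : 0 < ε) (hε : ε < 1 / 2 ^ t)
    (s : ℕ → ℕ)
    (hs1 : ∀ ℓ, ℓ < t - 1 → (s (ℓ + 1) : ℝ) ≤ ε * s ℓ)
    (hs2 : ∀ ℓ < t, s (t - 1) ∣ s ℓ)
    (hs3 : t < s (t - 1))
    (A : Finset V) (hA : max ((s 0 : ℝ)) (1 / ε ^ t) ≤ (A.card : ℝ)) :
    ∃ A' ⊆ A, Excellent G ε A' ∧ ∃ ℓ < t, A'.card = s ℓ := by
  by_contra hcon
  push_neg at hcon
  -- hcon : ∀ A' ⊆ A, Excellent G ε A' → ∀ ℓ < t, A'.card ≠ s ℓ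
  have hspos : 0 < s (t - 1) := by omega
  have hA0 : s 0 ≤ A.card := by
    have h := le_trans (le_max_left ((s 0 : ℝ)) (1 / ε ^ t)) hA
    exact_mod_cast h
  obtain ⟨A₀, hA₀A, hA₀c⟩ := Finset.exists_subset_card_eq hA0
  -- One splitting step: a non-excellent set of size s ℓ splits into two large pieces.
  have hstep : ∀ (ℓ : ℕ) (C : Finset V), ∃ (B : Finset V) (D : Bool → Finset V),
      ℓ < t → C ⊆ A → C.card = s ℓ →
      B.Nonempty ∧ Good G ε B ∧ ∀ i : Bool,
        D i ⊆ C ∧ (D i).card = (if ℓ + 1 < t then s (ℓ + 1) else 1) ∧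
        ∀ a ∈ D i, (Maj1 G ε a B ↔ i = true) := by
    intro ℓ C
    by_cases h : ℓ < t ∧ C ⊆ A ∧ C.card = s ℓ
    · obtain ⟨hℓ, hCA, hCc⟩ := h
      have hnex : ¬ Excellent G ε C := fun hx => hcon C hCA hx ℓ hℓ hCc
      unfold Excellent at hnex
      push_neg at hnex
      obtain ⟨B, hBne, hBg, h1, h0⟩ := hnex
      have hle : ∀ (c : ℕ), ε * (C.card : ℝ) ≤ (c : ℝ) →
          (if ℓ + 1 < t then s (ℓ + 1) else 1) ≤ c := by
        intro c hc
        by_cases h2 : ℓ + 1 < t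
        · rw [if_pos h2]
          have hx : (s (ℓ + 1) : ℝ) ≤ (c : ℝ) := by
            refine le_trans ?_ hc
            rw [hCc]
            exact hs1 ℓ (by omega)
          exact_mod_cast hx
        · rw [if_neg h2]
          have hℓeq : ℓ = t - 1 := by omega
          have hp : (0 : ℝ) < ε * (C.card : ℝ) := by
            apply mul_pos hε0
            rw [hCc, hℓeq]
            exact_mod_cast hspos
          have hcpos : (0 : ℝ) < (c : ℝ) := lt_of_lt_of_le hp hc
          have : 0 < c := by exact_mod_cast hcpos
          omega
      obtain ⟨D1, hD1, hD1c⟩ := Finset.exists_subset_card_eq (hle _ h1)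
      obtain ⟨D0, hD0, hD0c⟩ := Finset.exists_subset_card_eq (hle _ h0)
      refine ⟨B, fun i => if i = true then D1 else D0,
        fun _ _ _ => ⟨hBne, hBg, fun i => ?_⟩⟩
      cases i
      · simp only [if_neg]
        refine ⟨hD0.trans (filter_subset _ _), hD0c, fun a ha => ?_⟩
        have := (mem_filter.mp (hD0 ha)).2
        simp [this]
      · simp only [if_pos]
        refine ⟨hD1.trans (filter_subset _ _), hD1c, fun a ha => ?_⟩
        have := (mem_filter.mp (hD1 ha)).2
        simp [this]
    · exact ⟨∅, fun _ => ∅, fun h1 h2 h3 => absurd ⟨h1, h2, h3⟩ h⟩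
  choose Bf Df hstep using hstep
  set g : ℕ → (ℕ → Bool) → Finset V := treeAux A₀ Df with hgdef
  have hgs : ∀ (ℓ : ℕ) (η : ℕ → Bool), g (ℓ + 1) η = Df ℓ (g ℓ η) (η ℓ) :=
    fun ℓ η => rfl
  have hg0 : ∀ η : ℕ → Bool, g 0 η = A₀ := fun _ => rfl
  -- invariant: subsets of A and prescribed cardinalities
  have hinv : ∀ ℓ, ℓ ≤ t → ∀ η : ℕ → Bool,
      g ℓ η ⊆ A ∧ (g ℓ η).card = (if ℓ < t then s ℓ else 1) := by
    intro ℓ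
    induction ℓ with
    | zero =>
      intro _ η
      rw [hg0 η, if_pos (by omega : 0 < t)]
      exact ⟨hA₀A, hA₀c⟩
    | succ ℓ ih =>
      intro hℓ1 η
      have hℓ : ℓ < t := by omega
      obtain ⟨hsubA, hcard⟩ := ih (by omega) η
      rw [if_pos hℓ] at hcard
      obtain ⟨_, _, hD⟩ := hstep ℓ (g ℓ η) hℓ hsubA hcard
      obtain ⟨hDC, hDc, _⟩ := hD (η ℓ)
      rw [hgs ℓ η]
      exact ⟨hDC.trans hsubA, hDc⟩
  -- agreement: g ℓ depends only on the first ℓ bits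
  have hagr : ∀ ℓ (η η' : ℕ → Bool), (∀ j, j < ℓ → η j = η' j) → g ℓ η = g ℓ η' := by
    intro ℓ
    induction ℓ with
    | zero => intro η η' _; rw [hg0, hg0]
    | succ ℓ ih =>
      intro η η' hag
      rw [hgs ℓ η, hgs ℓ η', ih η η' (fun j hj => hag j (by omega)),
        hag ℓ (by omega)]
  have hgsub : ∀ ℓ, ℓ < t → ∀ η : ℕ → Bool, g (ℓ + 1) η ⊆ g ℓ η := by
    intro ℓ hℓ η
    obtain ⟨hCA, hCc⟩ := hinv ℓ hℓ.le η
    rw [if_pos hℓ] at hCc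
    obtain ⟨_, _, hD⟩ := hstep ℓ (g ℓ η) hℓ hCA hCc
    rw [hgs ℓ η]
    exact (hD (η ℓ)).1
  have hchain : ∀ ℓ, ℓ ≤ t → ∀ m, m < ℓ → ∀ η : ℕ → Bool, g ℓ η ⊆ g (m + 1) η := by
    intro ℓ
    induction ℓ with
    | zero => intro _ m hm; omega
    | succ ℓ ih =>
      intro hℓ1 m hm η
      rcases Nat.lt_succ_iff_lt_or_eq.mp hm with hlt | hEq
      · exact (hgsub ℓ (by omega) η).trans (ih (by omega) m hlt η)
      · subst hEq; exact subset_rfl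
  -- membership at a leaf determines majority truth values at all levels
  have hmem : ∀ m, m < t → ∀ (η : ℕ → Bool), ∀ x ∈ g t η,
      (Maj1 G ε x (Bf m (g m η)) ↔ η m = true) := by
    intro m hm η x hx
    obtain ⟨hCA, hCc⟩ := hinv m hm.le η
    rw [if_pos hm] at hCc
    obtain ⟨_, _, hD⟩ := hstep m (g m η) hm hCA hCc
    obtain ⟨_, _, hmaj⟩ := hD (η m)
    have hx2 : x ∈ g (m + 1) η := hchain t le_rfl m hm η hx
    rw [hgs m η] at hx2
    exact hmaj x hx2
  -- each leaf set is nonempty; pick a representative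
  have hne : ∀ η : ℕ → Bool, ∃ x, x ∈ g t η := by
    intro η
    obtain ⟨-, hc⟩ := hinv t le_rfl η
    rw [if_neg (lt_irrefl t)] at hc
    have : (g t η).Nonempty := Finset.card_pos.mp (by omega)
    exact this
  choose aEl haEl using hne
  -- canonical extension of finitary strings
  set ext : (Fin t → Bool) → (ℕ → Bool) :=
    fun σ j => if h : j < t then σ ⟨j, h⟩ else false with hext
  have hε2 : 2 ^ t * ε < 1 := by
    have h2 : (0 : ℝ) < 2 ^ t := by positivity
    rw [lt_div_iff₀ h2] at hε
    linarith [hε]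
  -- choose a vertex b working for all leaves below a node
  have hb : ∀ (m : ℕ) (hm : m < t) (ρ : Fin m → Bool),
      ∃ x : V, ∀ σ : Fin t → Bool,
        (∀ (j : ℕ) (hj : j < m), σ ⟨j, hj.trans hm⟩ = ρ ⟨j, hj⟩) →
        (G.Adj (aEl (ext σ)) x ↔ σ ⟨m, hm⟩ = true) := by
    intro m hm ρ
    set η₀ : ℕ → Bool := fun j => if h : j < m then ρ ⟨j, h⟩ else false with hη₀
    obtain ⟨hCA, hCc⟩ := hinv m hm.le η₀
    rw [if_pos hm] at hCc
    obtain ⟨hBne, hBg, -⟩ := hstep m (g m η₀) hm hCA hCc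
    set Bm : Finset V := Bf m (g m η₀) with hBm
    have hBpos : (0 : ℝ) < (Bm.card : ℝ) := by
      exact_mod_cast Finset.card_pos.mpr hBne
    set S : Finset (Fin t → Bool) := Finset.univ.filter
      (fun σ => ∀ (j : ℕ) (hj : j < m), σ ⟨j, hj.trans hm⟩ = ρ ⟨j, hj⟩) with hS
    set Bad : (Fin t → Bool) → Finset V := fun σ =>
      Bm.filter (fun x => ¬ (G.Adj (aEl (ext σ)) x ↔ σ ⟨m, hm⟩ = true)) with hBad
    have hbadcard : ∀ σ ∈ S, ((Bad σ).card : ℝ) < ε * (Bm.card : ℝ) := by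
      intro σ hσS
      have hσ := (Finset.mem_filter.mp hσS).2
      have hgm : g m (ext σ) = g m η₀ := by
        apply hagr
        intro j hj
        have hjt : j < t := hj.trans hm
        simp only [hext, hη₀, dif_pos hjt, dif_pos hj]
        exact hσ j hj
      have hx : aEl (ext σ) ∈ g t (ext σ) := haEl _
      have hMaj := hmem m hm (ext σ) _ hx
      rw [hgm] at hMaj
      have hextm : ext σ m = σ ⟨m, hm⟩ := by simp only [hext, dif_pos hm]
      rw [hextm] at hMaj
      rcases hσm : σ ⟨m, hm⟩ with _ | _
      · -- σ m = false: a is non-majority, so adjacency side of B is small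
        have hM : ¬ Maj1 G ε (aEl (ext σ)) Bm := by
          intro hMM
          rw [hσm] at hMaj
          simpa using hMaj.mp hMM
        rcases hBg (aEl (ext σ)) with hadj | hnon
        · refine lt_of_le_of_lt ?_ hadj
          have hsub : Bad σ ⊆ Bm.filter (fun x => G.Adj (aEl (ext σ)) x) := by
            intro x hx'
            obtain ⟨hx1, hx2⟩ := Finset.mem_filter.mp hx'
            refine Finset.mem_filter.mpr ⟨hx1, ?_⟩
            by_contra hnadj
            exact hx2 (by simp [hnadj, hσm])
          exact_mod_cast Finset.card_le_card hsub
        · exact absurd hnon (by rw [Maj1] at hM; exact hM)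
      · -- σ m = true: a is majority, non-adjacency side is small
        have hM : Maj1 G ε (aEl (ext σ)) Bm := by rw [hMaj, hσm]
        rw [Maj1] at hM
        refine lt_of_le_of_lt ?_ hM
        have hsub : Bad σ ⊆ Bm.filter (fun b => ¬ G.Adj (aEl (ext σ)) b) := by
          intro x hx'
          obtain ⟨hx1, hx2⟩ := Finset.mem_filter.mp hx'
          refine Finset.mem_filter.mpr ⟨hx1, ?_⟩
          intro hadj
          exact hx2 (by simp [hadj, hσm])
        exact_mod_cast Finset.card_le_card hsub
    have hSne : S.Nonempty := by
      refine ⟨fun j => if h : (j : ℕ) < m then ρ ⟨j, h⟩ else false, ?_⟩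
      rw [hS, Finset.mem_filter]
      exact ⟨Finset.mem_univ _, fun j hj => by simp [dif_pos hj]⟩
    have hScard : (S.card : ℝ) ≤ 2 ^ t := by
      have h1 : S.card ≤ Fintype.card (Fin t → Bool) := by
        rw [← Finset.card_univ]
        exact Finset.card_le_card (Finset.filter_subset _ _)
      have h2 : Fintype.card (Fin t → Bool) = 2 ^ t := by simp
      rw [h2] at h1
      exact_mod_cast h1
    have hUlt : ((S.biUnion Bad).card : ℝ) < (Bm.card : ℝ) := by
      have h1 : ((S.biUnion Bad).card : ℝ) ≤ ∑ σ ∈ S, ((Bad σ).card : ℝ) := by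
        exact_mod_cast Finset.card_biUnion_le
      have h2 : ∑ σ ∈ S, ((Bad σ).card : ℝ) < ∑ _σ ∈ S, ε * (Bm.card : ℝ) :=
        Finset.sum_lt_sum_of_nonempty hSne hbadcard
      have h3 : ∑ _σ ∈ S, ε * (Bm.card : ℝ) = (S.card : ℝ) * (ε * Bm.card) := by
        rw [Finset.sum_const, nsmul_eq_mul]
      have h4 : (S.card : ℝ) * (ε * (Bm.card : ℝ)) ≤ 2 ^ t * (ε * Bm.card) :=
        mul_le_mul_of_nonneg_right hScard (by positivity)
      have h5 : (2 : ℝ) ^ t * (ε * (Bm.card : ℝ)) < (Bm.card : ℝ) := by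
        calc (2 : ℝ) ^ t * (ε * Bm.card) = (2 ^ t * ε) * Bm.card := by ring
        _ < 1 * Bm.card := mul_lt_mul_of_pos_right hε2 hBpos
        _ = Bm.card := one_mul _
      linarith
    have hUlt' : (S.biUnion Bad).card < Bm.card := by exact_mod_cast hUlt
    have hnsub : ¬ Bm ⊆ S.biUnion Bad :=
      fun h => absurd (Finset.card_le_card h) (by omega)
    obtain ⟨x, hxB, hxU⟩ := Finset.not_subset.mp hnsub
    refine ⟨x, fun σ hσ => ?_⟩
    have hσS : σ ∈ S := Finset.mem_filter.mpr ⟨Finset.mem_univ _, hσ⟩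
    by_contra hbadx
    exact hxU (Finset.mem_biUnion.mpr ⟨σ, hσS,
      Finset.mem_filter.mpr ⟨hxB, hbadx⟩⟩)
  choose bfun hbprop using hb
  -- assemble the special tree
  apply hG
  refine ⟨fun m ρ => bfun m.1 m.isLt ρ, fun σ => aEl (ext σ), fun η m => ?_⟩
  have hag : ∀ (j : ℕ) (hj : j < (m : ℕ)),
      η ⟨j, hj.trans m.isLt⟩ = (fun i => η (Fin.castLE m.isLt.le i)) ⟨j, hj⟩ := by
    intro j hj
    rfl
  have h := hbprop m.1 m.isLt (fun i => η (Fin.castLE m.isLt.le i)) η hag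
  simpa using h
end

section
/- If A and B are ε-excellent subsets of a graph G with 0 < ε < 1/2, then the pair (A,B) is ε-uniform: there is a truth value t ∈ {0,1} such that for all but fewer than ε|A| elements a of A, for all but fewer than ε|B| elements b of B, R(a,b) holds iff t = 1. -/
open scoped Classical
open Finset

lemma good_of_excellent {V : Type*} (G : SimpleGraph V) (ε : ℝ) (A : Finset V)
    (hε0 : 0 < ε) (hε : ε < 1/2) (hA : Excellent G ε A) : Good G ε A := by
  intro b
  have hsing : Good G ε ({b} : Finset V) := by
    intro c
    by_cases h : G.Adj c b
    · right; simp [Finset.filter_singleton, h, hε0]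
    · left; simp [Finset.filter_singleton, h, hε0]
  have hmaj : ∀ a : V, Maj1 G ε a {b} ↔ G.Adj b a := by
    intro a
    unfold Maj1
    by_cases h : G.Adj a b
    · simp [Finset.filter_singleton, h, hε0, h.symm]
    · simp only [Finset.filter_singleton, if_pos h, Finset.card_singleton,
        Finset.card_singleton, Nat.cast_one, mul_one]
      constructor
      · intro h1; linarith
      · intro h1; exact absurd h1.symm h
  have h1 : A.filter (fun a => Maj1 G ε a {b}) = A.filter (fun a => G.Adj b a) :=
    Finset.filter_congr (fun a _ => by simp [hmaj a])
  have h2 : A.filter (fun a => ¬ Maj1 G ε a {b}) = A.filter (fun a => ¬ G.Adj b a) :=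
    Finset.filter_congr (fun a _ => by simp [hmaj a])
  have := hA {b} (Finset.singleton_nonempty b) hsing
  rw [h1, h2] at this
  exact this

/-- a pair of ε-excellent sets is ε-uniform (0 < ε < 1/2). -/
theorem excellent_pair_uniform {V : Type*} (G : SimpleGraph V) (ε : ℝ) (A B : Finset V)
    (hA0 : A.Nonempty) (hB0 : B.Nonempty)
    (hA : Excellent G ε A) (hB : Excellent G ε B)
    (hε0 : 0 < ε) (hε : ε < 1/2) :
    ∃ t : Bool, Uniform G ε A B t := by
  have hGB : Good G ε B := good_of_excellent G ε B hε0 hε hB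
  rcases hA B hB0 hGB with h | h
  · refine ⟨false, ?_⟩
    unfold Uniform
    refine lt_of_le_of_lt ?_ h
    have hsub : (A.filter fun a =>
        ¬ (((B.filter fun b => ¬ (G.Adj a b ↔ (false : Bool) = true)).card : ℝ) < ε * B.card))
        ⊆ A.filter (fun a => Maj1 G ε a B) := by
      intro a ha
      rw [Finset.mem_filter] at ha ⊢
      refine ⟨ha.1, ?_⟩
      have hcond := ha.2
      have heq : (B.filter fun b => ¬ (G.Adj a b ↔ (false : Bool) = true))
          = B.filter fun b => G.Adj a b := Finset.filter_congr (fun b _ => by simp)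
      rw [heq] at hcond
      rcases hGB a with h' | h'
      · exact absurd h' hcond
      · exact h'
    exact_mod_cast Finset.card_le_card hsub
  · refine ⟨true, ?_⟩
    unfold Uniform
    have heq : (A.filter fun a =>
        ¬ (((B.filter fun b => ¬ (G.Adj a b ↔ (true : Bool) = true)).card : ℝ) < ε * B.card))
        = A.filter (fun a => ¬ Maj1 G ε a B) := by
      apply Finset.filter_congr
      intro a _
      have : (B.filter fun b => ¬ (G.Adj a b ↔ (true : Bool) = true))
          = B.filter fun b => ¬ G.Adj a b := Finset.filter_congr (fun b _ => by simp)
      rw [this]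
      rfl
    rw [heq]
    exact h
end

section
/- Suppose A, B are ε-excellent subsets of a finite graph G with 0 < ε < 1/2, and let ζ = √(2ε). Then the pair (A,B) is ζ-regular and its edge density d(A,B) satisfies d(A,B) > 1 − ζ or d(A,B) < ζ. -/
open scoped Classical
open Finset

lemma card_filter_product' {α β : Type*} (s : Finset α) (t : Finset β) (Q : α → β → Prop)
    [DecidablePred fun p : α × β => Q p.1 p.2] [∀ a, DecidablePred (Q a)] :
    ((s ×ˢ t).filter fun p => Q p.1 p.2).card = ∑ a ∈ s, (t.filter fun b => Q a b).card := by
  rw [Finset.card_eq_sum_card_fiberwise (f := Prod.fst) (t := s)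
    (fun p hp => (Finset.mem_product.1 (Finset.mem_filter.1 hp).1).1)]
  refine Finset.sum_congr rfl fun a ha => ?_
  refine Finset.card_bij (fun p _ => p.2) ?_ ?_ ?_
  · rintro p hp
    simp only [Finset.mem_filter, Finset.mem_product] at hp ⊢
    rcases hp with ⟨⟨⟨hs, ht⟩, hq⟩, hfst⟩
    subst hfst
    exact ⟨ht, hq⟩
  · rintro p hp q hq hpq
    simp only [Finset.mem_filter, Finset.mem_product] at hp hq
    exact Prod.ext (hp.2.trans hq.2.symm) hpq
  · rintro b hb
    simp only [Finset.mem_filter] at hb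
    exact ⟨(a, b), by simp [ha, hb.1, hb.2], rfl⟩

lemma singleton_good {V : Type*} (G : SimpleGraph V) {ε : ℝ} (hε : 0 < ε) (x : V) :
    Good G ε {x} := by
  intro b
  by_cases h : G.Adj b x
  · right; simp [Finset.filter_singleton, h, hε]
  · left; simp [Finset.filter_singleton, h, hε]

lemma excellent_good {V : Type*} (G : SimpleGraph V) {ε : ℝ} (hε0 : 0 < ε) (hε : ε < 1/2)
    {A : Finset V} (hA : Excellent G ε A) : Good G ε A := by
  intro b
  have hmaj : ∀ a : V, Maj1 G ε a {b} ↔ G.Adj b a := by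
    intro a
    unfold Maj1
    by_cases h : G.Adj a b
    · simp [Finset.filter_singleton, h, h.symm, hε0]
    · simp only [Finset.filter_singleton, if_pos h, Finset.card_singleton,
        Finset.card_singleton, Nat.cast_one, mul_one]
      constructor
      · intro h1; linarith
      · intro h1; exact absurd ((G.adj_comm b a).1 h1) h
  have h1 : (A.filter fun a => Maj1 G ε a {b}) = A.filter fun a => G.Adj b a :=
    Finset.filter_congr fun a _ => by simp [hmaj a]
  have h2 : (A.filter fun a => ¬ Maj1 G ε a {b}) = A.filter fun a => ¬ G.Adj b a :=
    Finset.filter_congr fun a _ => by simp [hmaj a]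
  rcases hA {b} (Finset.singleton_nonempty b) (singleton_good G hε0 b) with h | h
  · left; rwa [h1] at h
  · right; rwa [h2] at h

lemma key_count {V : Type*} (G : SimpleGraph V) {ε ζ : ℝ} {A B A' B' : Finset V} (t : Bool)
    (hA' : A' ⊆ A) (hB' : B' ⊆ B) (hζ0 : 0 < ζ) (hζsq : ζ * ζ = 2 * ε)
    (hA'c : ζ * A.card ≤ A'.card) (hB'c : ζ * B.card ≤ B'.card)
    (hB0 : 0 < (B.card : ℝ))
    (hU : ((A.filter fun a =>
        ¬ (((B.filter fun b => ¬ (G.Adj a b ↔ t = true)).card : ℝ) < ε * B.card)).card : ℝ)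
      < ε * A.card) :
    (((A' ×ˢ B').filter fun p => ¬ (G.Adj p.1 p.2 ↔ t = true)).card : ℝ)
      < ζ * (A'.card * B'.card) := by
  set Q : V → V → Prop := fun a b => ¬ (G.Adj a b ↔ t = true) with hQ
  set P : V → Prop := fun a => ((B.filter fun b => Q a b).card : ℝ) < ε * B.card with hP
  have hε0 : 0 < ε := by nlinarith
  have hB'pos : (0 : ℝ) < B'.card := lt_of_lt_of_le (by positivity) hB'c
  have hεB : ε * B.card ≤ ζ / 2 * B'.card := by
    have : ε * B.card = ζ / 2 * (ζ * B.card) := by ring_nf; nlinarith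
    rw [this]
    have := mul_le_mul_of_nonneg_left hB'c (by positivity : (0:ℝ) ≤ ζ / 2)
    linarith
  have hεA : ε * A.card ≤ ζ / 2 * A'.card := by
    have h1 : ε * A.card = ζ / 2 * (ζ * A.card) := by ring_nf; nlinarith
    rw [h1]
    have := mul_le_mul_of_nonneg_left hA'c (by positivity : (0:ℝ) ≤ ζ / 2)
    linarith
  -- split the sum
  have hcard : ((A' ×ˢ B').filter fun p => ¬ (G.Adj p.1 p.2 ↔ t = true)).card
      = ∑ a ∈ A', ((B'.filter fun b => Q a b).card) := card_filter_product' A' B' Q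
  rw [hcard]
  have hsplit := Finset.sum_filter_add_sum_filter_not A' P
    (fun a => ((B'.filter fun b => Q a b).card : ℕ))
  have hsplit' := congrArg (fun n : ℕ => (n : ℝ)) hsplit
  push_cast at hsplit'
  push_cast
  rw [← hsplit']
  have hgood : (∑ a ∈ A'.filter P, ((B'.filter fun b => Q a b).card : ℝ))
      ≤ (A'.card : ℝ) * (ζ / 2 * B'.card) := by
    calc (∑ a ∈ A'.filter P, ((B'.filter fun b => Q a b).card : ℝ))
        ≤ ∑ _a ∈ A'.filter P, ζ / 2 * B'.card := by
          refine Finset.sum_le_sum fun a ha => ?_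
          have haP : P a := (Finset.mem_filter.1 ha).2
          have hmono : ((B'.filter fun b => Q a b).card : ℝ)
              ≤ ((B.filter fun b => Q a b).card : ℝ) := by
            exact_mod_cast Finset.card_le_card (Finset.filter_subset_filter _ hB')
          exact le_trans hmono (le_trans (le_of_lt haP) hεB)
      _ = ((A'.filter P).card : ℝ) * (ζ / 2 * B'.card) := by
          rw [Finset.sum_const, nsmul_eq_mul]
      _ ≤ (A'.card : ℝ) * (ζ / 2 * B'.card) := by
          have : ((A'.filter P).card : ℝ) ≤ A'.card := by
            exact_mod_cast Finset.card_le_card (Finset.filter_subset _ _)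
          exact mul_le_mul_of_nonneg_right this (by positivity)
  have hbad : (∑ a ∈ A'.filter fun a => ¬ P a, ((B'.filter fun b => Q a b).card : ℝ))
      < ζ / 2 * A'.card * B'.card := by
    have hb1 : (∑ a ∈ A'.filter fun a => ¬ P a, ((B'.filter fun b => Q a b).card : ℝ))
        ≤ ((A'.filter fun a => ¬ P a).card : ℝ) * B'.card := by
      calc _ ≤ ∑ _a ∈ A'.filter fun a => ¬ P a, (B'.card : ℝ) := by
              refine Finset.sum_le_sum fun a _ => ?_
              exact_mod_cast Finset.card_le_card (Finset.filter_subset _ _)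
        _ = _ := by rw [Finset.sum_const, nsmul_eq_mul]
    have hb2 : ((A'.filter fun a => ¬ P a).card : ℝ)
        ≤ ((A.filter fun a => ¬ P a).card : ℝ) := by
      exact_mod_cast Finset.card_le_card (Finset.filter_subset_filter _ hA')
    have hb3 : ((A.filter fun a => ¬ P a).card : ℝ) < ε * A.card := hU
    have : ((A'.filter fun a => ¬ P a).card : ℝ) < ζ / 2 * A'.card := by
      calc ((A'.filter fun a => ¬ P a).card : ℝ) ≤ _ := hb2
        _ < ε * A.card := hb3
        _ ≤ ζ / 2 * A'.card := hεA
    nlinarith [hB'pos]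
  have : ζ * ((A'.card : ℝ) * B'.card)
      = (A'.card : ℝ) * (ζ / 2 * B'.card) + ζ / 2 * A'.card * B'.card := by ring
  rw [this]
  exact add_lt_add_of_le_of_lt hgood hbad

lemma dens_nonneg' {V : Type*} (G : SimpleGraph V) (A B : Finset V) : 0 ≤ dens G A B := by
  unfold _root_.dens; positivity

lemma dens_le_one' {V : Type*} (G : SimpleGraph V) {A B : Finset V}
    (h : 0 < (A.card : ℝ) * B.card) : dens G A B ≤ 1 := by
  unfold _root_.dens
  rw [div_le_one h]
  have h1 : ((A ×ˢ B).filter fun p => G.Adj p.1 p.2).card ≤ A.card * B.card :=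
    le_trans (Finset.card_filter_le _ _) (le_of_eq (Finset.card_product _ _))
  exact_mod_cast h1

lemma one_sub_lt_dens {V : Type*} (G : SimpleGraph V) {ε ζ : ℝ} {A B A' B' : Finset V}
    (hA' : A' ⊆ A) (hB' : B' ⊆ B) (hζ0 : 0 < ζ) (hζsq : ζ * ζ = 2 * ε)
    (hA'c : ζ * A.card ≤ A'.card) (hB'c : ζ * B.card ≤ B'.card)
    (hA0 : 0 < (A.card : ℝ)) (hB0 : 0 < (B.card : ℝ))
    (hU : ((A.filter fun a =>
        ¬ (((B.filter fun b => ¬ (G.Adj a b ↔ (true : Bool) = true)).card : ℝ) < ε * B.card)).card : ℝ)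
      < ε * A.card) :
    1 - ζ < dens G A' B' := by
  have hkey := key_count G (t := true) hA' hB' hζ0 hζsq hA'c hB'c hB0 hU
  have hfe : ((A' ×ˢ B').filter fun p => ¬ (G.Adj p.1 p.2 ↔ (true : Bool) = true))
      = ((A' ×ˢ B').filter fun p => ¬ G.Adj p.1 p.2) :=
    Finset.filter_congr fun p _ => by simp
  rw [hfe] at hkey
  have hsum : ((A' ×ˢ B').filter fun p => G.Adj p.1 p.2).card
      + ((A' ×ˢ B').filter fun p => ¬ G.Adj p.1 p.2).card = A'.card * B'.card := by
    rw [Finset.card_filter_add_card_filter_not, Finset.card_product]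
  have hsum' := congrArg (fun n : ℕ => (n : ℝ)) hsum
  push_cast at hsum'
  have hA'pos : (0 : ℝ) < A'.card := lt_of_lt_of_le (by positivity) hA'c
  have hB'pos : (0 : ℝ) < B'.card := lt_of_lt_of_le (by positivity) hB'c
  unfold _root_.dens
  rw [lt_div_iff₀ (by positivity)]
  have hexp : (1 - ζ) * ((A'.card : ℝ) * B'.card)
      = (A'.card : ℝ) * B'.card - ζ * ((A'.card : ℝ) * B'.card) := by ring
  rw [hexp]
  linarith

lemma dens_lt {V : Type*} (G : SimpleGraph V) {ε ζ : ℝ} {A B A' B' : Finset V}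
    (hA' : A' ⊆ A) (hB' : B' ⊆ B) (hζ0 : 0 < ζ) (hζsq : ζ * ζ = 2 * ε)
    (hA'c : ζ * A.card ≤ A'.card) (hB'c : ζ * B.card ≤ B'.card)
    (hA0 : 0 < (A.card : ℝ)) (hB0 : 0 < (B.card : ℝ))
    (hU : ((A.filter fun a =>
        ¬ (((B.filter fun b => ¬ (G.Adj a b ↔ (false : Bool) = true)).card : ℝ) < ε * B.card)).card : ℝ)
      < ε * A.card) :
    dens G A' B' < ζ := by
  have hkey := key_count G (t := false) hA' hB' hζ0 hζsq hA'c hB'c hB0 hU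
  have hfe : ((A' ×ˢ B').filter fun p => ¬ (G.Adj p.1 p.2 ↔ (false : Bool) = true))
      = ((A' ×ˢ B').filter fun p => G.Adj p.1 p.2) :=
    Finset.filter_congr fun p _ => by simp
  rw [hfe] at hkey
  have hA'pos : (0 : ℝ) < A'.card := lt_of_lt_of_le (by positivity) hA'c
  have hB'pos : (0 : ℝ) < B'.card := lt_of_lt_of_le (by positivity) hB'c
  unfold _root_.dens
  rw [div_lt_iff₀ (by positivity)]
  linarith

/-- a pair of ε-excellent sets is ζ-regular for ζ = √(2ε), with density
> 1 - ζ or < ζ. -/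
theorem excellent_pair_regular {V : Type*} [Fintype V] (G : SimpleGraph V) (ε : ℝ)
    (A B : Finset V) (hA0 : A.Nonempty) (hB0 : B.Nonempty)
    (hA : Excellent G ε A) (hB : Excellent G ε B) (hε0 : 0 < ε) (hε : ε < 1/2) :
    Regular G (Real.sqrt (2 * ε)) A B ∧
      (1 - Real.sqrt (2 * ε) < dens G A B ∨ dens G A B < Real.sqrt (2 * ε)) := by
  set ζ := Real.sqrt (2 * ε) with hζdef
  have h2ε : 0 < 2 * ε := by linarith
  have hζ0 : 0 < ζ := Real.sqrt_pos.2 h2ε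
  have hζsq : ζ * ζ = 2 * ε := Real.mul_self_sqrt (le_of_lt h2ε)
  have hζ1 : ζ < 1 := by
    nlinarith [hζsq, hζ0]
  have hAcard : (0 : ℝ) < A.card := by exact_mod_cast Finset.card_pos.2 hA0
  have hBcard : (0 : ℝ) < B.card := by exact_mod_cast Finset.card_pos.2 hB0
  have hζA : ζ * A.card ≤ (A.card : ℝ) := by nlinarith
  have hζB : ζ * B.card ≤ (B.card : ℝ) := by nlinarith
  have hGB : Good G ε B := excellent_good G hε0 hε hB
  -- Get the uniformity statement for some truth value t
  rcases hA B hB0 hGB with hl | hr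
  · -- t = false
    have hU : ((A.filter fun a =>
        ¬ (((B.filter fun b => ¬ (G.Adj a b ↔ (false : Bool) = true)).card : ℝ) < ε * B.card)).card : ℝ)
        < ε * A.card := by
      have hsub : (A.filter fun a =>
          ¬ (((B.filter fun b => ¬ (G.Adj a b ↔ (false : Bool) = true)).card : ℝ) < ε * B.card))
          ⊆ A.filter fun a => Maj1 G ε a B := by
        intro a ha
        rw [Finset.mem_filter] at ha ⊢
        refine ⟨ha.1, ?_⟩
        have hBf : (B.filter fun b => ¬ (G.Adj a b ↔ (false : Bool) = true))
            = B.filter fun b => G.Adj a b := Finset.filter_congr fun b _ => by simp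
        rw [hBf] at ha
        rcases hGB a with h | h
        · have h' : ((B.filter fun b => G.Adj a b).card : ℝ) < ε * B.card := by
            have : (B.filter fun x => G.Adj a x) = B.filter fun x => G.Adj a x := rfl
            convert h using 3
          exact absurd h' ha.2
        · exact h
      calc ((A.filter fun a =>
          ¬ (((B.filter fun b => ¬ (G.Adj a b ↔ (false : Bool) = true)).card : ℝ) < ε * B.card)).card : ℝ)
          ≤ ((A.filter fun a => Maj1 G ε a B).card : ℝ) := by
            exact_mod_cast Finset.card_le_card hsub
        _ < ε * A.card := hl
    constructor
    · intro A' hA' B' hB' hc1 hc2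
      have h1 : dens G A' B' < ζ := dens_lt G hA' hB' hζ0 hζsq hc1 hc2 hAcard hBcard hU
      have h2 : dens G A B < ζ :=
        dens_lt G (subset_refl A) (subset_refl B) hζ0 hζsq hζA hζB hAcard hBcard hU
      have h3 := dens_nonneg' G A' B'
      have h4 := dens_nonneg' G A B
      rw [abs_lt]; constructor <;> linarith
    · right
      exact dens_lt G (subset_refl A) (subset_refl B) hζ0 hζsq hζA hζB hAcard hBcard hU
  · -- t = true
    have hU : ((A.filter fun a =>
        ¬ (((B.filter fun b => ¬ (G.Adj a b ↔ (true : Bool) = true)).card : ℝ) < ε * B.card)).card : ℝ)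
        < ε * A.card := by
      have heq : (A.filter fun a =>
          ¬ (((B.filter fun b => ¬ (G.Adj a b ↔ (true : Bool) = true)).card : ℝ) < ε * B.card))
          = A.filter fun a => ¬ Maj1 G ε a B := by
        refine Finset.filter_congr fun a _ => ?_
        have hBf : (B.filter fun b => ¬ (G.Adj a b ↔ (true : Bool) = true))
            = B.filter fun b => ¬ G.Adj a b := Finset.filter_congr fun b _ => by simp
        rw [hBf]
        rfl
      rw [heq]
      exact hr
    constructor
    · intro A' hA' B' hB' hc1 hc2
      have h1 : 1 - ζ < dens G A' B' :=
        one_sub_lt_dens G hA' hB' hζ0 hζsq hc1 hc2 hAcard hBcard hU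
      have h2 : 1 - ζ < dens G A B :=
        one_sub_lt_dens G (subset_refl A) (subset_refl B) hζ0 hζsq hζA hζB hAcard hBcard hU
      have hA'pos : (0 : ℝ) < A'.card := lt_of_lt_of_le (by positivity) hc1
      have hB'pos : (0 : ℝ) < B'.card := lt_of_lt_of_le (by positivity) hc2
      have h3 : dens G A' B' ≤ 1 := dens_le_one' G (by positivity)
      have h4 : dens G A B ≤ 1 := dens_le_one' G (by positivity)
      rw [abs_lt]; constructor <;> linarith
    · left
      exact one_sub_lt_dens G (subset_refl A) (subset_refl B) hζ0 hζsq hζA hζB hAcard hBcard hU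
end

section
/- If G is a k-edge stable graph, then for any finite subset A of vertices, the number of distinct neighborhood traces on A, i.e. |{ {a ∈ A : R(a,b)} : b a vertex of G }|, is at most Σ_{i≤k} C(|A|, i), and in particular at most |A|^k + 1. -/
open scoped Classical
open Finset

lemma sum_choose_le_pow (n k : ℕ) : ∑ i ∈ Finset.range (k+1), n.choose i ≤ n ^ k + 1 := by
  induction k with
  | zero => simp
  | succ k ih =>
    rw [Finset.sum_range_succ]
    rcases Nat.eq_zero_or_pos k with rfl | hk
    · simp [Nat.choose_one_right, Nat.add_comm]
    rcases Nat.eq_zero_or_pos n with rfl | hn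
    · have hc : Nat.choose 0 (k+1) = 0 := Nat.choose_eq_zero_of_lt (by omega)
      have hp : (0:ℕ) ^ k = 0 := zero_pow (by omega)
      have hp2 : (0:ℕ) ^ (k+1) = 0 := zero_pow (by omega)
      omega
    have h1 : n.choose (k+1) ≤ n.choose k * (n - k) := by
      nlinarith [Nat.choose_succ_right_eq n k]
    have h2 : n.choose k ≤ n ^ k := Nat.choose_le_pow n k
    have h3 : n ^ k + n ^ k * (n - k) ≤ n ^ (k+1) := by
      rw [pow_succ]
      calc n ^ k + n ^ k * (n - k) = n ^ k * (1 + (n-k)) := by ring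
        _ ≤ n ^ k * n := by apply Nat.mul_le_mul_left; omega
    have := Nat.mul_le_mul_right (n - k) h2
    omega


lemma halfgraph_of_shattered {V : Type*} (G : SimpleGraph V) (k : ℕ) (S : Finset V)
    (hcard : S.card = k + 1)
    (hW : ∀ T : Finset V, T ⊆ S → ∃ b : V, ∀ a ∈ S, (G.Adj a b ↔ a ∈ T)) :
    ∃ a b : Fin k → V, Function.Injective (Sum.elim a b) ∧
      ∀ i j, G.Adj (a i) (b j) ↔ i < j := by
  choose W hWspec using hW
  set N : V → Finset V := fun x => S.filter (fun y => G.Adj x y) with hN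
  have hSne : S.Nonempty := Finset.card_pos.1 (by omega)
  obtain ⟨u, huS, humin⟩ := S.exists_min_image (fun x => (N x).card) hSne
  set E : Finset V := S.erase u with hE
  have hES : E ⊆ S := Finset.erase_subset _ _
  have hEcard : E.card = k := by rw [hE, Finset.card_erase_of_mem huS, hcard]; omega
  set D : Finset (Finset V) := E.powerset.filter
    (fun C => (∃ x ∈ E, N x = C) ∧ ∃ x ∈ E, N x = insert u C) with hD
  have hNxu : ∀ x ∈ E, ∀ C : Finset V, N x = insert u C → x ∈ N u := by
    intro x hx C hNx
    have hux : u ∈ N x := hNx ▸ Finset.mem_insert_self u C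
    have hadj : G.Adj x u := (Finset.mem_filter.1 hux).2
    exact Finset.mem_filter.2 ⟨Finset.mem_of_mem_erase hx, hadj.symm⟩
  have hDcard : D.card ≤ (N u).card := by
    have hFval : ∀ (C : Finset V) (h : ∃ x ∈ E, N x = insert u C),
        (if h : ∃ x ∈ E, N x = insert u C then h.choose else u) = h.choose :=
      fun C h => dif_pos h
    refine Finset.card_le_card_of_injOn
      (fun C => if h : ∃ x ∈ E, N x = insert u C then h.choose else u) ?_ ?_
    · intro C hC
      have hex := ((Finset.mem_filter.1 hC).2).2
      show (if h : ∃ x ∈ E, N x = insert u C then h.choose else u) ∈ N u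
      rw [hFval C hex]
      exact hNxu _ hex.choose_spec.1 _ hex.choose_spec.2
    · intro C hC C' hC' hfe
      have hex := ((Finset.mem_filter.1 hC).2).2
      have hex' := ((Finset.mem_filter.1 hC').2).2
      have hfe' : hex.choose = hex'.choose := by
        rw [← hFval C hex, ← hFval C' hex']; exact hfe
      have hfe := hfe'
      have h1 : N hex.choose = insert u C := hex.choose_spec.2
      have h2 : N hex'.choose = insert u C' := hex'.choose_spec.2
      rw [hfe, h2] at h1
      have huC : u ∉ C := fun hu =>
        (Finset.mem_erase.1 (Finset.mem_powerset.1 (Finset.mem_filter.1 hC).1 hu)).1 rfl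
      have huC' : u ∉ C' := fun hu =>
        (Finset.mem_erase.1 (Finset.mem_powerset.1 (Finset.mem_filter.1 hC').1 hu)).1 rfl
      calc C = (insert u C).erase u := (Finset.erase_insert huC).symm
        _ = (insert u C').erase u := by rw [h1]
        _ = C' := Finset.erase_insert huC'
  have hDsize : ∀ C ∈ D, (N u).card ≤ C.card := by
    intro C hC
    obtain ⟨x, hx, hNx⟩ := ((Finset.mem_filter.1 hC).2).1
    calc (N u).card ≤ (N x).card := humin x (Finset.mem_of_mem_erase hx)
      _ = C.card := by rw [hNx]
  have step : ∀ X : Finset V, X ⊆ E → X.Nonempty → ∃ y ∈ X, X.erase y ∉ D := by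
    intro X hXE hXne
    by_contra hstep
    push_neg at hstep
    have hinj : Set.InjOn (fun y => X.erase y) X := by
      intro y hy y' hy' he
      by_contra hne
      have hmem : y' ∈ X.erase y := Finset.mem_erase.2 ⟨fun h => hne h.symm, hy'⟩
      simp only at he
      rw [he] at hmem
      exact (Finset.mem_erase.1 hmem).1 rfl
    have h1 : X.card ≤ D.card := Finset.card_le_card_of_injOn _ (fun y hy => hstep y hy) hinj
    obtain ⟨y0, hy0⟩ := hXne
    have h2 : (N u).card ≤ (X.erase y0).card := hDsize _ (hstep y0 hy0)
    have h3 : (X.erase y0).card = X.card - 1 := Finset.card_erase_of_mem hy0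
    have h4 : 1 ≤ X.card := Finset.card_pos.2 ⟨y0, hy0⟩
    omega
  let g : ℕ → Finset V := fun j => Nat.rec E
    (fun _ X => if h : ∃ y ∈ X, X.erase y ∉ D then X.erase h.choose else ∅) j
  have hg0 : g 0 = E := rfl
  have hgsucc : ∀ j, g (j+1) =
      if h : ∃ y ∈ g j, (g j).erase y ∉ D then (g j).erase h.choose else ∅ := fun j => rfl
  have gmono : ∀ j, g (j+1) ⊆ g j := by
    intro j
    rw [hgsucc j]
    split
    · exact Finset.erase_subset _ _
    · exact Finset.empty_subset _
  have gmono' : ∀ j j', j ≤ j' → g j' ⊆ g j := by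
    intro j j' hjj
    induction j' with
    | zero => have hj : j = 0 := by omega
              subst hj; exact Finset.Subset.refl _
    | succ j' ih =>
      rcases Nat.eq_or_lt_of_le hjj with rfl | hlt
      · exact Finset.Subset.refl _
      · exact (gmono j').trans (ih (by omega))
  have key : ∀ j, j ≤ k → g j ⊆ E ∧ (g j).card = k - j ∧ (1 ≤ j → g j ∉ D) := by
    intro j
    induction j with
    | zero => intro _
              exact ⟨Finset.Subset.refl _, by rw [hg0, hEcard]; omega, fun h => absurd h (by omega)⟩
    | succ j ih =>
      intro hjk
      obtain ⟨hsub, hcardj, _⟩ := ih (by omega)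
      have hne : (g j).Nonempty := Finset.card_pos.1 (by omega)
      have hex : ∃ y ∈ g j, (g j).erase y ∉ D := step _ hsub hne
      rw [hgsucc j, dif_pos hex]
      obtain ⟨hy, hyD⟩ := hex.choose_spec
      exact ⟨(Finset.erase_subset _ _).trans hsub,
        by rw [Finset.card_erase_of_mem hy]; omega, fun _ => hyD⟩
  have hsel : ∀ i : Fin k, ∃ x, x ∈ g (k - (i.val+1)) ∧ x ∉ g (k - i.val) := by
    intro i
    have h1 : (g (k - (i.val+1))).card = k - (k - (i.val+1)) := (key _ (by omega)).2.1
    have h2 : (g (k - i.val)).card = k - (k - i.val) := (key _ (by omega)).2.1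
    have hss : g (k - i.val) ⊆ g (k - (i.val+1)) := gmono' _ _ (by omega)
    have hlt : (g (k - i.val)).card < (g (k - (i.val+1))).card := by
      rw [h1, h2]; have := i.isLt; omega
    have hssu : g (k - i.val) ⊂ g (k - (i.val+1)) :=
      hss.ssubset_of_ne (fun he => by rw [he] at hlt; exact lt_irrefl _ hlt)
    obtain ⟨x, hx1, hx2⟩ := Finset.exists_of_ssubset hssu
    exact ⟨x, hx1, hx2⟩
  choose a ha1 ha2 using hsel
  have haC : ∀ (i : Fin k) (j : ℕ), j ≤ k → (a i ∈ g (k - j) ↔ (i : ℕ) < j) := by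
    intro i j hj
    constructor
    · intro hmem
      by_contra hlt
      push_neg at hlt
      exact ha2 i (gmono' _ _ (by omega) hmem)
    · intro hij
      exact gmono' _ _ (by omega) (ha1 i)
  have haE : ∀ i : Fin k, a i ∈ E := fun i => (key _ (by omega)).1 (ha1 i)
  have hT : ∀ j : Fin k, ∃ T : Finset V, T ⊆ S ∧
      (∀ x, x ∈ E → (x ∈ T ↔ x ∈ g (k - j.val))) ∧ ¬ ∃ x ∈ E, N x = T := by
    intro j
    have hjk : (j : ℕ) < k := j.isLt
    have hCD : g (k - j.val) ∉ D := (key _ (by omega)).2.2 (by omega)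
    have hCE : g (k - j.val) ⊆ E := (key _ (by omega)).1
    have hCS : g (k - j.val) ⊆ S := hCE.trans hES
    rcases Classical.em (∃ x ∈ E, N x = g (k - j.val)) with hP | hP
    · refine ⟨insert u (g (k - j.val)), Finset.insert_subset huS hCS, ?_, ?_⟩
      · intro x hxE
        simp only [Finset.mem_insert]
        constructor
        · rintro (rfl | hmem)
          · exact absurd hxE (Finset.notMem_erase x S)
          · exact hmem
        · exact Or.inr
      · intro hQ
        exact hCD (Finset.mem_filter.2 ⟨Finset.mem_powerset.2 hCE, hP, hQ⟩)
    · exact ⟨g (k - j.val), hCS, fun x _ => Iff.rfl, hP⟩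
  choose T hTS hTmem hTnot using hT
  set b : Fin k → V := fun j => W (T j) (hTS j) with hbdef
  have hb : ∀ (j : Fin k), ∀ x ∈ S, (G.Adj x (b j) ↔ x ∈ T j) := fun j => hWspec (T j) (hTS j)
  have hadj : ∀ i j : Fin k, G.Adj (a i) (b j) ↔ i < j := by
    intro i j
    rw [hb j (a i) (hES (haE i)), hTmem j (a i) (haE i),
        haC i j.val (le_of_lt j.isLt)]
    exact (Fin.lt_def).symm
  have hainj : Function.Injective a := by
    have haux : ∀ i i' : Fin k, a i = a i' → (i : ℕ) < (i' : ℕ) → False := by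
      intro i i' he hlt
      have h1 : a i ∈ g (k - i'.val) := (haC i i'.val (le_of_lt i'.isLt)).2 hlt
      rw [he] at h1
      have := (haC i' i'.val (le_of_lt i'.isLt)).1 h1
      omega
    intro i i' he
    by_contra hne
    rcases Nat.lt_or_ge (i : ℕ) (i' : ℕ) with h | h
    · exact haux i i' he h
    · rcases Nat.lt_or_ge (i' : ℕ) (i : ℕ) with h' | h'
      · exact haux i' i he.symm h'
      · exact hne (Fin.ext (by omega))
  have hbinj : Function.Injective b := by
    have haux : ∀ j j' : Fin k, b j = b j' → (j : ℕ) < (j' : ℕ) → False := by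
      intro j j' he hlt
      have h1 := hadj j j
      have h2 := hadj j j'
      rw [he] at h1
      have h3 : j < j' := Fin.lt_def.2 hlt
      have h4 : j < j := h1.1 (h2.2 h3)
      exact lt_irrefl _ h4
    intro j j' he
    by_contra hne
    rcases Nat.lt_or_ge (j : ℕ) (j' : ℕ) with h | h
    · exact haux j j' he h
    · rcases Nat.lt_or_ge (j' : ℕ) (j : ℕ) with h' | h'
      · exact haux j' j he.symm h'
      · exact hne (Fin.ext (by omega))
  have hmix : ∀ i j : Fin k, a i ≠ b j := by
    intro i j he
    apply hTnot j
    refine ⟨a i, haE i, ?_⟩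
    ext y
    simp only [hN, Finset.mem_filter]
    constructor
    · rintro ⟨hyS, hadj'⟩
      have h1 : G.Adj y (b j) := by rw [← he]; exact hadj'.symm
      exact (hb j y hyS).1 h1
    · intro hyT
      have hyS : y ∈ S := hTS j hyT
      have h1 : G.Adj y (b j) := (hb j y hyS).2 hyT
      rw [← he] at h1
      exact ⟨hyS, h1.symm⟩
  refine ⟨a, b, ?_, hadj⟩
  intro x y hxy
  cases x with
  | inl i =>
    cases y with
    | inl i' => exact congrArg Sum.inl (hainj hxy)
    | inr j => exact absurd hxy (hmix i j)
  | inr j =>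
    cases y with
    | inl i => exact absurd hxy.symm (hmix i j)
    | inr j' => exact congrArg Sum.inr (hbinj hxy)

/-- Sauer–Shelah instance: a k-edge stable graph has few neighborhood
traces on any finite vertex set. -/
theorem trace_bound {V : Type*} [Fintype V] (G : SimpleGraph V) (k : ℕ)
    (h : EdgeStable G k) (A : Finset V) :
    ((Finset.univ.image fun b : V => A.filter fun a => G.Adj a b).card
        ≤ ∑ i ∈ Finset.range (k + 1), (A.card).choose i) ∧
    ((Finset.univ.image fun b : V => A.filter fun a => G.Adj a b).card
        ≤ A.card ^ k + 1) := by
  set 𝒜 : Finset (Finset V) := Finset.univ.image fun b : V => A.filter fun a => G.Adj a b with h𝒜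
  have main : 𝒜.card ≤ ∑ i ∈ Finset.range (k + 1), (A.card).choose i := by
    by_contra hcon
    push_neg at hcon
    have hsub : ∀ s ∈ 𝒜.shatterer, s ⊆ A := by
      intro s hs
      obtain ⟨t, ht, hst⟩ := (Finset.mem_shatterer.1 hs).exists_superset
      obtain ⟨b, _, rfl⟩ := Finset.mem_image.1 ht
      exact hst.trans (Finset.filter_subset _ _)
    have hbig : ∃ s ∈ 𝒜.shatterer, k + 1 ≤ s.card := by
      by_contra hb
      push_neg at hb
      have hsub2 : 𝒜.shatterer ⊆ (Finset.range (k+1)).biUnion fun i => A.powersetCard i := by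
        intro s hs
        refine Finset.mem_biUnion.2 ⟨s.card, Finset.mem_range.2 (hb s hs), ?_⟩
        exact Finset.mem_powersetCard.2 ⟨hsub s hs, rfl⟩
      have h1 : 𝒜.shatterer.card ≤ ∑ i ∈ Finset.range (k+1), (A.powersetCard i).card :=
        le_trans (Finset.card_le_card hsub2) (Finset.card_biUnion_le)
      simp_rw [Finset.card_powersetCard] at h1
      exact absurd (le_trans (Finset.card_le_card_shatterer 𝒜) h1) (not_le.2 hcon)
    obtain ⟨s, hs, hsk⟩ := hbig
    obtain ⟨S, hSs, hScard⟩ := Finset.exists_subset_card_eq hsk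
    have hShat : 𝒜.Shatters S := (Finset.mem_shatterer.1 hs).mono_right hSs
    have hSA : S ⊆ A := hSs.trans (hsub s hs)
    have hW : ∀ T : Finset V, T ⊆ S → ∃ b : V, ∀ a ∈ S, (G.Adj a b ↔ a ∈ T) := by
      intro T hT
      obtain ⟨t, ht, hSt⟩ := hShat hT
      obtain ⟨b, _, rfl⟩ := Finset.mem_image.1 ht
      refine ⟨b, fun a haS => ?_⟩
      constructor
      · intro hadj
        rw [← hSt]
        exact Finset.mem_inter.2 ⟨haS, Finset.mem_filter.2 ⟨hSA haS, hadj⟩⟩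
      · intro haT
        rw [← hSt] at haT
        exact (Finset.mem_filter.1 (Finset.mem_inter.1 haT).2).2
    exact h (halfgraph_of_shattered G k S hScard hW)
  exact ⟨main, le_trans main (sum_choose_le_pow A.card k)⟩
end
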